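/- Let W' be a reflection subgroup of W, and suppose x, y ∈ Δ₁(W') with r_x ≠ r_y. Let n ∈ ℕ ∪ {∞} be the order of r_x·r_y. Then ⟨x, φ(y)⟩ ≤ 0; moreover ⟨x, φ(y)⟩·⟨y, φ(x)⟩ = cos²(π/n) if n ∈ ℕ with n ≥ 2, and ⟨x, φ(y)⟩·⟨y, φ(x)⟩ ∈ [1, ∞) if n = ∞. -/

import Mathlib

open Pointwise

/-- The positive linear cone of a subset `A` of a real vector space: finite linear
combinations of elements of `A` with all coefficients nonnegative and at least one
strictly positive. -/
def PLC {V : Type*} [AddCommGroup V] [Module ℝ V] (A : Set V) : Set V :=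
  { v | ∃ c : V →₀ ℝ, (∀ a, 0 ≤ c a) ∧ ↑c.support ⊆ A ∧ c ≠ 0 ∧
          v = c.sum fun a t => t • a }

/-- `altEnd a b m` is the alternating product `⋯ a b a b` … of `m` factors,
ending with `b` (e.g. `altEnd a b 3 = b * a * b`). -/
def altEnd {G : Type*} [Monoid G] : G → G → ℕ → G
  | _, _, 0 => 1
  | a, b, m + 1 => altEnd b a m * b

/-- The class of `z` under the equivalence "being nonzero scalar multiples of each
other" (the class `ẑ`). -/
def rayClass {V : Type*} [AddCommGroup V] [Module ℝ V] (z : V) : Set V :=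
  { v | ∃ c : ℝ, c ≠ 0 ∧ v = c • z }

/-- The set `Â = {ẑ : z ∈ A}` of scalar-equivalence classes of elements of `A`. -/
def rayClasses {V : Type*} [AddCommGroup V] [Module ℝ V] (A : Set V) : Set (Set V) :=
  { C | ∃ z ∈ A, C = rayClass z }

/-- A Coxeter datum `(S, V₁, V₂, Π₁, Π₂, ⟨·,·⟩)` satisfying (D1)–(D5), together with
its associated abstract Coxeter group `W` (a group generated by involutions
`r s`, acting faithfully on `V₁` and `V₂` in the prescribed way, with the pairing
`W`-invariant), the decomposition `Φᵢ = Φᵢ⁺ ⊎ Φᵢ⁻` of the paired root systems, the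
`W`-equivariant bijection `φ : Φ₁ → Φ₂` (with inverse `phiInv`), and the reflections
`r_x ∈ T` attached to the roots `x ∈ Φ₁` (`refl₁`) resp. `y ∈ Φ₂` (`refl₂`). -/
structure CoxeterDatum (S : Type*) (V₁ : Type*) (V₂ : Type*) (W : Type*)
    [AddCommGroup V₁] [Module ℝ V₁] [AddCommGroup V₂] [Module ℝ V₂] [Group W] where
  pair : V₁ →ₗ[ℝ] V₂ →ₗ[ℝ] ℝ
  α : S → V₁
  β : S → V₂
  α_inj : Function.Injective α
  β_inj : Function.Injective β
  D1 : ∀ s, pair (α s) (β s) = 1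
  D2a : (0 : V₁) ∉ PLC (Set.range α)
  D2b : (0 : V₂) ∉ PLC (Set.range β)
  D2c : ∀ s, α s ∉ PLC (Set.range α \ {α s})
  D2d : ∀ s, β s ∉ PLC (Set.range β \ {β s})
  D3 : ∀ s t, s ≠ t → pair (α s) (β t) ≤ 0
  D4 : ∀ s t, pair (α s) (β t) = 0 → pair (α t) (β s) = 0
  D5 : ∀ s t, s ≠ t →
    (∃ m : ℕ, 2 ≤ m ∧ pair (α s) (β t) * pair (α t) (β s) = Real.cos (Real.pi / m) ^ 2) ∨
      1 ≤ pair (α s) (β t) * pair (α t) (β s)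
  /-- the Coxeter generators `R = {r s : s ∈ S}` of `W` -/
  r : S → W
  r_gen : Subgroup.closure (Set.range r) = ⊤
  r_ne_one : ∀ s, r s ≠ 1
  r_sq : ∀ s, r s * r s = 1
  /-- the faithful action of `W` on `V₁` -/
  ρ₁ : W →* Module.End ℝ V₁
  /-- the faithful action of `W` on `V₂` -/
  ρ₂ : W →* Module.End ℝ V₂
  ρ₁_inj : Function.Injective ρ₁
  ρ₂_inj : Function.Injective ρ₂
  hr₁ : ∀ s x, ρ₁ (r s) x = x - (2 * pair x (β s)) • α s
  hr₂ : ∀ s y, ρ₂ (r s) y = y - (2 * pair (α s) y) • β s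
  pair_inv : ∀ w x y, pair (ρ₁ w x) (ρ₂ w y) = pair x y
  /-- the `W`-equivariant bijection `φ : Φ₁ → Φ₂` -/
  phi : V₁ → V₂
  /-- the inverse `φ⁻¹ : Φ₂ → Φ₁` -/
  phiInv : V₂ → V₁
  /-- the reflection `r_x` corresponding to a root `x ∈ Φ₁` -/
  refl₁ : V₁ → W
  /-- the reflection `r_y` corresponding to a root `y ∈ Φ₂` -/
  refl₂ : V₂ → W
  decomp₁ : { v | ∃ w s, v = ρ₁ w (α s) } =
      ({ v | ∃ w s, v = ρ₁ w (α s) } ∩ PLC (Set.range α)) ∪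
        (-({ v | ∃ w s, v = ρ₁ w (α s) } ∩ PLC (Set.range α)))
  disj₁ : Disjoint ({ v | ∃ w s, v = ρ₁ w (α s) } ∩ PLC (Set.range α))
      (-({ v | ∃ w s, v = ρ₁ w (α s) } ∩ PLC (Set.range α)))
  decomp₂ : { v | ∃ w s, v = ρ₂ w (β s) } =
      ({ v | ∃ w s, v = ρ₂ w (β s) } ∩ PLC (Set.range β)) ∪
        (-({ v | ∃ w s, v = ρ₂ w (β s) } ∩ PLC (Set.range β)))
  disj₂ : Disjoint ({ v | ∃ w s, v = ρ₂ w (β s) } ∩ PLC (Set.range β))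
      (-({ v | ∃ w s, v = ρ₂ w (β s) } ∩ PLC (Set.range β)))
  phi_mem : ∀ x ∈ { v | ∃ w s, v = ρ₁ w (α s) }, phi x ∈ { v | ∃ w s, v = ρ₂ w (β s) }
  phiInv_mem : ∀ y ∈ { v | ∃ w s, v = ρ₂ w (β s) }, phiInv y ∈ { v | ∃ w s, v = ρ₁ w (α s) }
  phiInv_phi : ∀ x ∈ { v | ∃ w s, v = ρ₁ w (α s) }, phiInv (phi x) = x
  phi_phiInv : ∀ y ∈ { v | ∃ w s, v = ρ₂ w (β s) }, phi (phiInv y) = y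
  phi_simple : ∀ s, phi (α s) = β s
  phi_equiv : ∀ w, ∀ x ∈ { v | ∃ w s, v = ρ₁ w (α s) }, phi (ρ₁ w x) = ρ₂ w (phi x)
  refl₁_eq : ∀ w s, refl₁ (ρ₁ w (α s)) = w * r s * w⁻¹
  refl₂_eq : ∀ w s, refl₂ (ρ₂ w (β s)) = w * r s * w⁻¹
  refl₁_act : ∀ x ∈ { v | ∃ w s, v = ρ₁ w (α s) }, ∀ v,
      ρ₁ (refl₁ x) v = v - (2 * pair v (phi x)) • x
  refl₂_act : ∀ y ∈ { v | ∃ w s, v = ρ₂ w (β s) }, ∀ v,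
      ρ₂ (refl₂ y) v = v - (2 * pair (phiInv y) v) • y

namespace CoxeterDatum

variable {S V₁ V₂ W : Type*} [AddCommGroup V₁] [Module ℝ V₁]
  [AddCommGroup V₂] [Module ℝ V₂] [Group W]

variable (D : CoxeterDatum S V₁ V₂ W)

/-- The root system `Φ₁ = W Π₁`. -/
def Phi₁ : Set V₁ := { v | ∃ w s, v = D.ρ₁ w (D.α s) }

/-- The root system `Φ₂ = W Π₂`. -/
def Phi₂ : Set V₂ := { v | ∃ w s, v = D.ρ₂ w (D.β s) }

/-- The positive roots `Φ₁⁺ = Φ₁ ∩ PLC Π₁`. -/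
def PhiPos₁ : Set V₁ := D.Phi₁ ∩ PLC (Set.range D.α)

/-- The positive roots `Φ₂⁺ = Φ₂ ∩ PLC Π₂`. -/
def PhiPos₂ : Set V₂ := D.Phi₂ ∩ PLC (Set.range D.β)

/-- The negative roots `Φ₁⁻ = -Φ₁⁺`. -/
def PhiNeg₁ : Set V₁ := -D.PhiPos₁

/-- The negative roots `Φ₂⁻ = -Φ₂⁺`. -/
def PhiNeg₂ : Set V₂ := -D.PhiPos₂

/-- The set `T = ⋃_{w ∈ W} w R w⁻¹` of reflections of `W`. -/
def T : Set W := { t | ∃ w s, t = w * D.r s * w⁻¹ }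

/-- The length function `ℓ` of `W` with respect to the Coxeter generators `R`. -/
noncomputable def len (w : W) : ℕ :=
  sInf { n | ∃ l : List S, l.length = n ∧ (l.map D.r).prod = w }

/-- `N̄ w = {t ∈ T : ℓ(w t) < ℓ(w)}`. -/
noncomputable def Nbar (w : W) : Set W :=
  { t | t ∈ D.T ∧ D.len (w * t) < D.len w }

/-- `N₁ w = {ẑ : z ∈ Φ₁⁺, w z ∈ Φ₁⁻}`. -/
def N₁ (w : W) : Set (Set V₁) :=
  { C | ∃ z, z ∈ D.PhiPos₁ ∧ D.ρ₁ w z ∈ D.PhiNeg₁ ∧ C = rayClass z }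

/-- `N₂ w = {ẑ : z ∈ Φ₂⁺, w z ∈ Φ₂⁻}`. -/
def N₂ (w : W) : Set (Set V₂) :=
  { C | ∃ z, z ∈ D.PhiPos₂ ∧ D.ρ₂ w z ∈ D.PhiNeg₂ ∧ C = rayClass z }

/-- A subgroup `W'` of `W` is a reflection subgroup when `W' = ⟨W' ∩ T⟩`. -/
def IsReflectionSubgroup (W' : Subgroup W) : Prop :=
  W' = Subgroup.closure ((W' : Set W) ∩ D.T)

/-- `Φ₁(W') = {x ∈ Φ₁ : r_x ∈ W'}`. -/
def PhiSub₁ (W' : Subgroup W) : Set V₁ :=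
  { x | x ∈ D.Phi₁ ∧ D.refl₁ x ∈ W' }

/-- `Φ₂(W') = {y ∈ Φ₂ : r_y ∈ W'}`. -/
def PhiSub₂ (W' : Subgroup W) : Set V₂ :=
  { y | y ∈ D.Phi₂ ∧ D.refl₂ y ∈ W' }

/-- The canonical generators `S(W') = {t ∈ T : N̄(t) ∩ W' = {t}}`. -/
noncomputable def SW (W' : Subgroup W) : Set W :=
  { t | t ∈ D.T ∧ D.Nbar t ∩ (W' : Set W) = {t} }

/-- `Δ₁(W') = {x ∈ Φ₁⁺ : r_x ∈ S(W')}`. -/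
noncomputable def Delta₁ (W' : Subgroup W) : Set V₁ :=
  { x | x ∈ D.PhiPos₁ ∧ D.refl₁ x ∈ D.SW W' }

/-- `Δ₂(W') = {y ∈ Φ₂⁺ : r_y ∈ S(W')}`. -/
noncomputable def Delta₂ (W' : Subgroup W) : Set V₂ :=
  { y | y ∈ D.PhiPos₂ ∧ D.refl₂ y ∈ D.SW W' }

/-- The length function `ℓ_{W'}` of a reflection subgroup `W'` with respect to its
canonical generators `S(W')`. -/
noncomputable def lenIn (W' : Subgroup W) (w : W) : ℕ :=
  sInf { n | ∃ l : List W, l.length = n ∧ (∀ t ∈ l, t ∈ D.SW W') ∧ l.prod = w }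

end CoxeterDatum
section PLCLemmas

variable {V : Type*} [AddCommGroup V] [Module ℝ V]

theorem plc_add {A : Set V} {u v : V} (hu : u ∈ PLC A) (hv : v ∈ PLC A) :
    u + v ∈ PLC A := by
  classical
  obtain ⟨c, hc0, hcs, hcne, hcsum⟩ := hu
  obtain ⟨d, hd0, hds, hdne, hdsum⟩ := hv
  refine ⟨c + d, fun a => add_nonneg (hc0 a) (hd0 a), ?_, ?_, ?_⟩
  · intro a ha
    rcases Finset.mem_union.1 (Finsupp.support_add (Finset.mem_coe.1 ha)) with h | h
    · exact hcs (Finset.mem_coe.2 h)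
    · exact hds (Finset.mem_coe.2 h)
  · intro h
    obtain ⟨a, ha⟩ := Finsupp.ne_iff.1 hcne
    have h2 : c a + d a = 0 := by
      have := DFunLike.congr_fun h a
      simpa using this
    have : c a = 0 := by
      have h1 := hc0 a; have h3 := hd0 a; linarith
    simp [this] at ha
  · rw [hcsum, hdsum]
    exact (Finsupp.sum_add_index' (fun a => zero_smul ℝ a)
      (fun a b₁ b₂ => add_smul b₁ b₂ a)).symm

theorem plc_smul {A : Set V} {u : V} {r : ℝ} (hr : 0 < r) (hu : u ∈ PLC A) :
    r • u ∈ PLC A := by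
  classical
  obtain ⟨c, hc0, hcs, hcne, hcsum⟩ := hu
  refine ⟨r • c, fun a => by
      simpa using mul_nonneg hr.le (hc0 a), ?_, ?_, ?_⟩
  · intro a ha
    exact hcs (Finset.mem_coe.2 (Finsupp.support_smul (Finset.mem_coe.1 ha)))
  · intro h
    exact hcne (by simpa [hr.ne'] using (smul_eq_zero.1 h))
  · rw [hcsum, Finsupp.smul_sum]
    rw [Finsupp.sum_smul_index (fun a => zero_smul ℝ a)]
    exact Finsupp.sum_congr fun a _ => (mul_smul r (c a) a).symm

theorem plc_of_mem {A : Set V} {a : V} (ha : a ∈ A) : a ∈ PLC A := by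
  classical
  refine ⟨Finsupp.single a 1, fun b => ?_, ?_, ?_, ?_⟩
  · rw [Finsupp.single_apply]; split <;> norm_num
  · intro b hb
    have := Finsupp.support_single_subset (Finset.mem_coe.1 hb)
    simp only [Finset.mem_singleton] at this
    exact this ▸ ha
  · intro h
    have := DFunLike.congr_fun h a
    simp at this
  · rw [Finsupp.sum_single_index (zero_smul ℝ a), one_smul]

theorem plc_salient {A : Set V} (h0 : (0 : V) ∉ PLC A) {u : V}
    (hu : u ∈ PLC A) (hnu : -u ∈ PLC A) : False := by
  have := plc_add hu hnu
  rw [add_neg_cancel] at this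
  exact h0 this

theorem plc_nonzero {A : Set V} (h0 : (0 : V) ∉ PLC A) {u : V} (hu : u ∈ PLC A) :
    u ≠ 0 := fun h => h0 (h ▸ hu)

/-- Key extraction lemma: if a nonnegative combination of elements of `A` equals
`μ • v` with `v ∈ A`, then the combination is supported on `v` alone. -/
theorem plc_extract {A : Set V} (h0 : (0 : V) ∉ PLC A)
    (hext : ∀ a ∈ A, a ∉ PLC (A \ {a}))
    {h : V →₀ ℝ} (hh0 : ∀ a, 0 ≤ h a) (hhs : ↑h.support ⊆ A)
    {v : V} (hvA : v ∈ A) (hv0 : v ≠ 0) {μ : ℝ}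
    (heq : h.sum (fun a t => t • a) = μ • v) :
    h = Finsupp.single v μ := by
  classical
  set ν := h v with hν
  set h' := h.erase v with hh'
  have hsupp' : (h'.support : Set V) ⊆ A \ {v} := by
    intro a ha
    simp only [hh', Finsupp.support_erase, Finset.coe_erase, Set.mem_diff] at ha ⊢
    exact ⟨hhs ha.1, ha.2⟩
  have h'0 : ∀ a, 0 ≤ h' a := by
    intro a
    rcases eq_or_ne a v with rfl | hav
    · simp [hh']
    · simpa [hh', Finsupp.erase_ne hav] using hh0 a
  have h'v : h' v = 0 := by simp [hh']
  have hsplit : h' + Finsupp.single v ν = h := Finsupp.erase_add_single v h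
  have hsum : h'.sum (fun a t => t • a) + ν • v = μ • v := by
    have := congrArg (fun f : V →₀ ℝ => f.sum (fun a t => t • a)) hsplit
    rw [Finsupp.sum_add_index' (fun a => zero_smul ℝ a)
      (fun a b₁ b₂ => add_smul b₁ b₂ a)] at this
    rw [Finsupp.sum_single_index (zero_smul ℝ v)] at this
    rw [heq] at this
    exact this
  have hsum' : h'.sum (fun a t => t • a) = (μ - ν) • v := by
    rw [sub_smul]; linear_combination (norm := module) hsum
  rcases lt_trichotomy ν μ with hlt | heqc | hgt
  · -- μ - ν > 0 : contradiction with extremality of v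
    exfalso
    rcases eq_or_ne h' 0 with h'z | h'nz
    · rw [h'z, Finsupp.sum_zero_index] at hsum'
      exact hv0 (by
        have : (μ - ν)⁻¹ • ((μ - ν) • v) = (0:V) := by rw [← hsum']; simp
        rwa [smul_smul, inv_mul_cancel₀ (by linarith), one_smul] at this)
    · refine hext v hvA ⟨(μ - ν)⁻¹ • h', fun a => ?_, ?_, ?_, ?_⟩
      · simpa using mul_nonneg (inv_nonneg.2 (by linarith)) (h'0 a)
      · intro a ha
        exact hsupp' (Finset.mem_coe.2 (Finsupp.support_smul (Finset.mem_coe.1 ha)))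
      · intro hc
        exact h'nz (by simpa [inv_ne_zero (show μ - ν ≠ 0 by linarith)] using
          smul_eq_zero.1 hc)
      · rw [Finsupp.sum_smul_index (fun a => zero_smul ℝ a)]
        have : (Finsupp.sum h' fun a t => ((μ - ν)⁻¹ * t) • a)
            = (μ - ν)⁻¹ • Finsupp.sum h' (fun a t => t • a) := by
          rw [Finsupp.smul_sum]
          exact Finsupp.sum_congr fun a _ => (mul_smul _ _ a)
        rw [this, hsum', smul_smul, inv_mul_cancel₀ (by linarith), one_smul]
  · -- ν = μ : the good case
    rcases eq_or_ne h' 0 with h'z | h'nz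
    · rw [← hsplit, h'z, zero_add, heqc]
    · exfalso
      apply h0
      refine ⟨h', h'0, subset_trans hsupp' Set.diff_subset, h'nz, ?_⟩
      rw [hsum', heqc]; simp
  · -- ν > μ : 0 is a positive combination
    exfalso
    apply h0
    refine ⟨h' + Finsupp.single v (ν - μ), fun a => ?_, ?_, ?_, ?_⟩
    · rcases eq_or_ne a v with rfl | hav
      · rw [Finsupp.add_apply, h'v, Finsupp.single_eq_same, zero_add]
        linarith
      · have hz : (Finsupp.single v (ν - μ)) a = 0 := by
          rw [Finsupp.single_apply]; simp [Ne.symm hav]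
        rw [Finsupp.add_apply, hz, add_zero]
        exact h'0 a
    · intro a ha
      rcases Finset.mem_union.1 (Finsupp.support_add (Finset.mem_coe.1 ha)) with h1 | h1
      · exact Set.diff_subset (hsupp' (Finset.mem_coe.2 h1))
      · have := Finsupp.support_single_subset h1
        simp only [Finset.mem_singleton] at this
        exact this ▸ hvA
    · intro hc
      have : (h' + Finsupp.single v (ν - μ)) v = 0 := by rw [hc]; simp
      rw [Finsupp.add_apply, h'v, Finsupp.single_eq_same, zero_add] at this
      linarith
    · rw [Finsupp.sum_add_index' (fun a => zero_smul ℝ a)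
        (fun a b₁ b₂ => add_smul b₁ b₂ a),
        Finsupp.sum_single_index (zero_smul ℝ v), hsum']
      module

end PLCLemmas
namespace CoxeterDatum

section RootBasics

variable {S V₁ V₂ W : Type*} [AddCommGroup V₁] [Module ℝ V₁]
  [AddCommGroup V₂] [Module ℝ V₂] [Group W]

variable (D : CoxeterDatum S V₁ V₂ W)

theorem rho1_mul (u v : W) (x : V₁) : D.ρ₁ (u * v) x = D.ρ₁ u (D.ρ₁ v x) := by
  rw [map_mul]; rfl

theorem rho1_one (x : V₁) : D.ρ₁ 1 x = x := by rw [map_one]; rfl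

theorem rho1_inv_apply (u : W) (x : V₁) : D.ρ₁ u⁻¹ (D.ρ₁ u x) = x := by
  rw [← rho1_mul, inv_mul_cancel, rho1_one]

theorem rho1_apply_inv (u : W) (x : V₁) : D.ρ₁ u (D.ρ₁ u⁻¹ x) = x := by
  rw [← rho1_mul, mul_inv_cancel, rho1_one]

theorem alpha_ne_zero (s : S) : D.α s ≠ 0 := by
  intro h
  have := D.D1 s
  rw [h] at this
  simp at this

theorem mem_phi1_iff {z : V₁} : z ∈ D.Phi₁ ↔ ∃ w s, z = D.ρ₁ w (D.α s) := Iff.rfl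

theorem phi1_stable {z : V₁} (hz : z ∈ D.Phi₁) (w : W) : D.ρ₁ w z ∈ D.Phi₁ := by
  obtain ⟨u, s, rfl⟩ := hz
  exact ⟨w * u, s, by rw [rho1_mul]⟩

theorem alpha_mem_phi1 (s : S) : D.α s ∈ D.Phi₁ := ⟨1, s, (rho1_one D _).symm⟩

theorem alpha_mem_pos (s : S) : D.α s ∈ D.PhiPos₁ :=
  ⟨alpha_mem_phi1 D s, plc_of_mem ⟨s, rfl⟩⟩

theorem root_ne_zero {z : V₁} (hz : z ∈ D.Phi₁) : z ≠ 0 := by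
  obtain ⟨u, s, rfl⟩ := hz
  intro h
  apply alpha_ne_zero D s
  have := congrArg (D.ρ₁ u⁻¹) h
  rw [rho1_inv_apply] at this
  simpa using this

theorem rho_r_alpha_self (s : S) : D.ρ₁ (D.r s) (D.α s) = -D.α s := by
  rw [D.hr₁ s (D.α s), D.D1 s]
  module

theorem neg_mem_phi1 {z : V₁} (hz : z ∈ D.Phi₁) : -z ∈ D.Phi₁ := by
  obtain ⟨u, s, rfl⟩ := hz
  exact ⟨u * D.r s, s, by rw [rho1_mul, rho_r_alpha_self, map_neg]⟩

theorem root_trichotomy {z : V₁} (hz : z ∈ D.Phi₁) :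
    z ∈ D.PhiPos₁ ∨ -z ∈ D.PhiPos₁ := by
  have h := Set.ext_iff.1 D.decomp₁ z
  rcases h.1 hz with h1 | h1
  · exact Or.inl h1
  · right
    rwa [Set.mem_neg] at h1

theorem pos_neg_exclusive {z : V₁} (hz : z ∈ D.PhiPos₁) (hz' : -z ∈ D.PhiPos₁) :
    False := plc_salient D.D2a hz.2 hz'.2

theorem mem_neg_pos_iff {z : V₁} : z ∈ D.PhiNeg₁ ↔ -z ∈ D.PhiPos₁ := Set.mem_neg

theorem pos_not_neg {z : V₁} (hz : z ∈ D.PhiPos₁) : z ∉ D.PhiNeg₁ := by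
  intro h
  exact pos_neg_exclusive D hz ((mem_neg_pos_iff D).1 h)

theorem pos_or_neg {z : V₁} (hz : z ∈ D.Phi₁) :
    z ∈ D.PhiPos₁ ∨ z ∈ D.PhiNeg₁ := by
  rcases root_trichotomy D hz with h | h
  · exact Or.inl h
  · exact Or.inr ((mem_neg_pos_iff D).2 h)

theorem phi_rho (w : W) {z : V₁} (hz : z ∈ D.Phi₁) :
    D.phi (D.ρ₁ w z) = D.ρ₂ w (D.phi z) := D.phi_equiv w z hz

theorem pair_self_phi {z : V₁} (hz : z ∈ D.Phi₁) : D.pair z (D.phi z) = 1 := by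
  obtain ⟨u, s, rfl⟩ := hz
  rw [phi_rho D u (alpha_mem_phi1 D s), D.phi_simple, D.pair_inv, D.D1]

theorem refl_conj (w : W) {z : V₁} (hz : z ∈ D.Phi₁) :
    D.refl₁ (D.ρ₁ w z) = w * D.refl₁ z * w⁻¹ := by
  obtain ⟨u, s, rfl⟩ := hz
  rw [← rho1_mul, D.refl₁_eq, D.refl₁_eq]
  group

theorem refl_alpha (s : S) : D.refl₁ (D.α s) = D.r s := by
  have := D.refl₁_eq 1 s
  rw [rho1_one] at this
  simpa using this

theorem r_mul_self (s : S) : D.r s * D.r s = 1 := D.r_sq s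

theorem r_inv (s : S) : (D.r s)⁻¹ = D.r s := inv_eq_of_mul_eq_one_right (D.r_sq s)

theorem refl_sq {z : V₁} (hz : z ∈ D.Phi₁) : D.refl₁ z * D.refl₁ z = 1 := by
  obtain ⟨u, s, rfl⟩ := hz
  rw [D.refl₁_eq]
  have h2 : (u * D.r s * u⁻¹) * (u * D.r s * u⁻¹) = u * (D.r s * D.r s) * u⁻¹ := by
    group
  rw [h2, D.r_sq]
  group

theorem refl_inv {z : V₁} (hz : z ∈ D.Phi₁) : (D.refl₁ z)⁻¹ = D.refl₁ z :=
  inv_eq_of_mul_eq_one_right (refl_sq D hz)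

theorem refl_ne_one {z : V₁} (hz : z ∈ D.Phi₁) : D.refl₁ z ≠ 1 := by
  obtain ⟨u, s, rfl⟩ := hz
  rw [D.refl₁_eq]
  intro h
  apply D.r_ne_one s
  have := congrArg (fun g => u⁻¹ * g * u) h
  simpa [mul_assoc] using this

theorem refl_mem_T {z : V₁} (hz : z ∈ D.Phi₁) : D.refl₁ z ∈ D.T := by
  obtain ⟨u, s, rfl⟩ := hz
  exact ⟨u, s, D.refl₁_eq u s⟩

theorem refl_act' {z : V₁} (hz : z ∈ D.Phi₁) (v : V₁) :
    D.ρ₁ (D.refl₁ z) v = v - (2 * D.pair v (D.phi z)) • z := D.refl₁_act z hz v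

theorem refl_neg_self {z : V₁} (hz : z ∈ D.Phi₁) : D.ρ₁ (D.refl₁ z) z = -z := by
  rw [refl_act' D hz, pair_self_phi D hz]
  module

theorem smul_of_refl_eq {z z' : V₁} (hz : z ∈ D.Phi₁) (hz' : z' ∈ D.Phi₁)
    (h : D.refl₁ z = D.refl₁ z') : z' = (D.pair z' (D.phi z)) • z := by
  have h1 : D.ρ₁ (D.refl₁ z) z' = z' - (2 * D.pair z' (D.phi z)) • z :=
    refl_act' D hz z'
  rw [h, refl_neg_self D hz'] at h1
  have : (2 : ℝ) • z' = (2 * D.pair z' (D.phi z)) • z := by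
    linear_combination (norm := module) -h1
  have := congrArg (fun v => (2 : ℝ)⁻¹ • v) this
  simpa [smul_smul, ← mul_assoc] using this

theorem pos_smul_pos_coeff {z z' : V₁} (hz : z ∈ D.PhiPos₁) (hz' : z' ∈ D.PhiPos₁)
    {μ : ℝ} (h : z' = μ • z) : 0 < μ := by
  rcases lt_trichotomy 0 μ with h1 | h1 | h1
  · exact h1
  · exfalso
    apply root_ne_zero D hz'.1
    rw [h, ← h1, zero_smul]
  · exfalso
    apply pos_neg_exclusive D hz'
    refine ⟨neg_mem_phi1 D hz'.1, ?_⟩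
    have : -z' = (-μ) • z := by rw [h]; module
    rw [this]
    exact (plc_smul (by linarith) hz.2 : ((-μ) • z) ∈ _)

end RootBasics

end CoxeterDatum
namespace CoxeterDatum

section Extraction

variable {S V₁ V₂ W : Type*} [AddCommGroup V₁] [Module ℝ V₁]
  [AddCommGroup V₂] [Module ℝ V₂] [Group W]

variable (D : CoxeterDatum S V₁ V₂ W)

theorem hext_alpha : ∀ a ∈ Set.range D.α, a ∉ PLC (Set.range D.α \ {a}) := by
  rintro a ⟨s, rfl⟩
  exact D.D2c s

/-- Lemma P: if a simple reflection sends a positive root to a negative root,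
then the root is a positive multiple of the corresponding simple root. -/
theorem flip_simple {z : V₁} (hz : z ∈ D.PhiPos₁) {v : S}
    (hneg : D.ρ₁ (D.r v) z ∈ D.PhiNeg₁) : ∃ c : ℝ, 0 < c ∧ z = c • D.α v := by
  classical
  set μ := 2 * D.pair z (D.β v) with hμ
  have hact : D.ρ₁ (D.r v) z = z - μ • D.α v := D.hr₁ v z
  have hplc : μ • D.α v - z ∈ PLC (Set.range D.α) := by
    have := ((mem_neg_pos_iff D).1 hneg).2
    rw [hact] at this
    simpa using this
  obtain ⟨f, hf0, hfs, hfne, hfsum⟩ := hz.2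
  obtain ⟨g, hg0, hgs, hgne, hgsum⟩ := hplc
  have hsum : (f + g).sum (fun a t => t • a) = μ • D.α v := by
    rw [Finsupp.sum_add_index' (fun a => zero_smul ℝ a)
      (fun a b₁ b₂ => add_smul b₁ b₂ a), ← hfsum, ← hgsum]
    module
  have hfg := plc_extract D.D2a (hext_alpha D)
    (fun a => add_nonneg (hf0 a) (hg0 a))
    (fun a ha => by
      rcases Finset.mem_union.1 (Finsupp.support_add (Finset.mem_coe.1 ha)) with h | h
      · exact hfs (Finset.mem_coe.2 h)
      · exact hgs (Finset.mem_coe.2 h))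
    ⟨v, rfl⟩ (alpha_ne_zero D v) hsum
  have hfz : ∀ a, a ≠ D.α v → f a = 0 := by
    intro a ha
    have h1 := DFunLike.congr_fun hfg a
    rw [Finsupp.add_apply, Finsupp.single_apply] at h1
    rw [if_neg (fun hc => ha hc.symm)] at h1
    have := hf0 a; have := hg0 a
    linarith
  have hfsingle : f = Finsupp.single (D.α v) (f (D.α v)) := by
    ext a
    rcases eq_or_ne a (D.α v) with rfl | ha
    · simp
    · rw [hfz a ha, Finsupp.single_apply, if_neg (fun hc => ha hc.symm)]
  refine ⟨f (D.α v), ?_, ?_⟩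
  · rcases (hf0 (D.α v)).lt_or_eq with h | h
    · exact h
    · exfalso
      apply hfne
      rw [hfsingle, ← h, Finsupp.single_zero]
  · conv_lhs => rw [hfsum, hfsingle]
    exact Finsupp.sum_single_index (zero_smul ℝ _)

/-- SL1 : `α s' + K α t` is not a root when `K < 0`. -/
theorem simple_combo_not_root {s' t : S} (hst : D.α s' ≠ D.α t) {K : ℝ}
    (hK : K < 0) : D.α s' + K • D.α t ∉ D.Phi₁ := by
  classical
  intro hroot
  rcases pos_or_neg D hroot with hpos | hneg
  · obtain ⟨f, hf0, hfs, hfne, hfsum⟩ := hpos.2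
    have hsum : (f + Finsupp.single (D.α t) (-K)).sum (fun a t => t • a)
        = (1:ℝ) • D.α s' := by
      rw [Finsupp.sum_add_index' (fun a => zero_smul ℝ a)
        (fun a b₁ b₂ => add_smul b₁ b₂ a),
        show (Finsupp.single (D.α t) (-K)).sum (fun a t => t • a) = (-K) • D.α t
          from Finsupp.sum_single_index (zero_smul ℝ _), ← hfsum]
      module
    have hfg := plc_extract D.D2a (hext_alpha D)
      (fun a => add_nonneg (hf0 a) (by
        rw [Finsupp.single_apply]; split <;> linarith))
      (fun a ha => by
        rcases Finset.mem_union.1 (Finsupp.support_add (Finset.mem_coe.1 ha)) with h | h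
        · exact hfs (Finset.mem_coe.2 h)
        · have := Finsupp.support_single_subset h
          simp only [Finset.mem_singleton] at this
          exact this ▸ ⟨t, rfl⟩)
      ⟨s', rfl⟩ (alpha_ne_zero D s') hsum
    have h1 := DFunLike.congr_fun hfg (D.α t)
    rw [Finsupp.add_apply, Finsupp.single_eq_same, Finsupp.single_apply,
      if_neg hst] at h1
    have := hf0 (D.α t)
    linarith
  · have hplc : -(D.α s' + K • D.α t) ∈ PLC (Set.range D.α) :=
      ((mem_neg_pos_iff D).1 hneg).2
    obtain ⟨f, hf0, hfs, hfne, hfsum⟩ := hplc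
    have hsum : (f + Finsupp.single (D.α s') (1:ℝ)).sum (fun a t => t • a)
        = (-K) • D.α t := by
      rw [Finsupp.sum_add_index' (fun a => zero_smul ℝ a)
        (fun a b₁ b₂ => add_smul b₁ b₂ a),
        show (Finsupp.single (D.α s') (1:ℝ)).sum (fun a t => t • a) = (1:ℝ) • D.α s'
          from Finsupp.sum_single_index (zero_smul ℝ _), ← hfsum]
      module
    have hfg := plc_extract D.D2a (hext_alpha D)
      (fun a => add_nonneg (hf0 a) (by
        rw [Finsupp.single_apply]; split <;> linarith))
      (fun a ha => by
        rcases Finset.mem_union.1 (Finsupp.support_add (Finset.mem_coe.1 ha)) with h | h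
        · exact hfs (Finset.mem_coe.2 h)
        · have := Finsupp.support_single_subset h
          simp only [Finset.mem_singleton] at this
          exact this ▸ ⟨s', rfl⟩)
      ⟨t, rfl⟩ (alpha_ne_zero D t) hsum
    have h1 := DFunLike.congr_fun hfg (D.α s')
    rw [Finsupp.add_apply, Finsupp.single_eq_same, Finsupp.single_apply,
      if_neg (fun hc => hst hc.symm)] at h1
    have := hf0 (D.α s')
    linarith

end Extraction

end CoxeterDatum
namespace CoxeterDatum

section RayLemma

variable {S V₁ V₂ W : Type*} [AddCommGroup V₁] [Module ℝ V₁]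
  [AddCommGroup V₂] [Module ℝ V₂] [Group W]

variable (D : CoxeterDatum S V₁ V₂ W)

theorem prod_inv_eq_reverse (l : List S) :
    ((l.map D.r).prod)⁻¹ = ((l.reverse.map D.r)).prod := by
  induction l with
  | nil => simp
  | cons s l ih =>
    rw [List.map_cons, List.prod_cons, mul_inv_rev, ih, List.reverse_cons,
      List.map_append, List.prod_append, List.map_cons, List.prod_cons,
      List.map_nil, List.prod_nil, D.r_inv, mul_one]

theorem exists_word (w : W) : ∃ l : List S, (l.map D.r).prod = w := by
  have hw : w ∈ Subgroup.closure (Set.range D.r) := by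
    rw [D.r_gen]; exact Subgroup.mem_top w
  induction hw using Subgroup.closure_induction with
  | mem x hx =>
    obtain ⟨s, rfl⟩ := hx
    exact ⟨[s], by simp⟩
  | one => exact ⟨[], by simp⟩
  | mul x y _ _ hx hy =>
    obtain ⟨l1, rfl⟩ := hx
    obtain ⟨l2, rfl⟩ := hy
    exact ⟨l1 ++ l2, by rw [List.map_append, List.prod_append]⟩
  | inv x _ hx =>
    obtain ⟨l, rfl⟩ := hx
    exact ⟨l.reverse, (prod_inv_eq_reverse D l).symm⟩

theorem rho1_sub_mem_span (w : W) (v : V₁) :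
    D.ρ₁ w v - v ∈ Submodule.span ℝ (Set.range D.α) := by
  obtain ⟨l, rfl⟩ := exists_word D w
  induction l generalizing v with
  | nil => simp
  | cons s l ih =>
    rw [List.map_cons, List.prod_cons, rho1_mul]
    have h1 : D.ρ₁ (D.r s) (D.ρ₁ ((l.map D.r).prod) v) - D.ρ₁ ((l.map D.r).prod) v
        ∈ Submodule.span ℝ (Set.range D.α) := by
      rw [D.hr₁]
      have : ∀ z : V₁, z - (2 * D.pair z (D.β s)) • D.α s - z
          = -((2 * D.pair z (D.β s)) • D.α s) := fun z => by module
      rw [this]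
      exact Submodule.neg_mem _ (Submodule.smul_mem _ _
        (Submodule.subset_span ⟨s, rfl⟩))
    have h2 := ih v
    have := Submodule.add_mem _ h1 h2
    simpa using this

/-- Core triviality criterion: an element fixing all simple roots on `V₁`, which is
conjugate to its inverse, is the identity. -/
theorem eq_one_of_fix (w : W) (hfix : ∀ s, D.ρ₁ w (D.α s) = D.α s)
    (hconj : ∃ u, u * w * u⁻¹ = w⁻¹) : w = 1 := by
  have hspan : ∀ v ∈ Submodule.span ℝ (Set.range D.α), D.ρ₁ w v = v := by
    intro v hv
    induction hv using Submodule.span_induction with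
    | mem x hx => obtain ⟨s, rfl⟩ := hx; exact hfix s
    | zero => simp
    | add x y _ _ hx hy => rw [map_add, hx, hy]
    | smul c x _ hx => rw [map_smul, hx]
  have hcomm : ∀ s, Commute w (D.r s) := by
    intro s
    have h1 := D.refl₁_eq w s
    rw [hfix s, refl_alpha D s] at h1
    have : w * D.r s = D.r s * w := by
      have := congrArg (fun g => g * w) h1.symm
      simpa [mul_assoc] using this
    exact this
  have hcentral : ∀ u : W, Commute w u := by
    intro u
    have hu : u ∈ Subgroup.closure (Set.range D.r) := by
      rw [D.r_gen]; exact Subgroup.mem_top u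
    induction hu using Subgroup.closure_induction with
    | mem x hx => obtain ⟨s, rfl⟩ := hx; exact hcomm s
    | one => exact Commute.one_right w
    | mul x y _ _ hx hy => exact hx.mul_right hy
    | inv x _ hx => exact hx.inv_right
  have hww : w * w = 1 := by
    obtain ⟨u, hu⟩ := hconj
    have h2 : u * w * u⁻¹ = w := by
      rw [(hcentral u).symm.eq]
      group
    have h3 : w⁻¹ = w := by rw [← hu, h2]
    calc w * w = w * w⁻¹ := by rw [h3]
    _ = 1 := mul_inv_cancel w
  have hfixall : ∀ v : V₁, D.ρ₁ w v = v := by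
    intro v
    have hd := rho1_sub_mem_span D w v
    set d := D.ρ₁ w v - v with hdd
    have h1 : D.ρ₁ w (D.ρ₁ w v) = v := by
      rw [← rho1_mul, hww, rho1_one]
    have h2 : D.ρ₁ w v = v + d := by rw [hdd]; module
    have h3 : D.ρ₁ w d = d := hspan d hd
    rw [h2, map_add, h2, h3] at h1
    have h4 : (2:ℝ) • d = 0 := by linear_combination (norm := module) h1
    have hd0 : d = 0 := by
      rcases smul_eq_zero.1 h4 with h | h
      · norm_num at h
      · exact h
    rw [h2, hd0, add_zero]
  apply D.ρ₁_inj
  rw [map_one]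
  exact LinearMap.ext hfixall

/-- The Ray Lemma: if `u · α_s` is a scalar multiple of `α_t` then the
corresponding reflections agree. -/
theorem ray_lemma {u : W} {s t : S} {μ : ℝ}
    (hμ : D.ρ₁ u (D.α s) = μ • D.α t) : u * D.r s * u⁻¹ = D.r t := by
  set z := D.ρ₁ u (D.α s) with hz
  have hzphi : z ∈ D.Phi₁ := ⟨u, s, rfl⟩
  have hμ0 : μ ≠ 0 := by
    intro h
    exact root_ne_zero D hzphi (by rw [hμ, h, zero_smul])
  have hpairz : D.pair (D.α t) (D.phi z) = μ⁻¹ := by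
    have h1 := pair_self_phi D hzphi
    have h2 := congrArg (fun v' => D.pair v' (D.phi z)) hμ
    simp only [map_smul, LinearMap.smul_apply, smul_eq_mul] at h2
    rw [h2] at h1
    field_simp
    linarith
  set q := D.r t * D.refl₁ z with hq
  set g : V₁ → ℝ := fun v => μ * D.pair v (D.phi z) - D.pair v (D.β t) with hg
  have hrtz : D.ρ₁ (D.r t) z = -z := by
    rw [hμ, map_smul, rho_r_alpha_self]
    module
  have hact : ∀ v, D.ρ₁ q v = v + (2 * g v) • D.α t := by
    intro v
    rw [hq, rho1_mul, refl_act' D hzphi, map_sub, map_smul, D.hr₁, hrtz, hg]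
    simp only
    linear_combination (norm := module) (2 * D.pair v (D.phi z)) • hμ
  have hgt : g (D.α t) = 0 := by
    rw [hg]
    simp only
    rw [hpairz, D.D1, mul_inv_cancel₀ hμ0, sub_self]
  have hfix_t : D.ρ₁ q (D.α t) = D.α t := by
    rw [hact, hgt]; simp
  have hact_inv : ∀ v, D.ρ₁ q⁻¹ v = v - (2 * g v) • D.α t := by
    intro v
    have h1 : D.ρ₁ q⁻¹ (D.ρ₁ q v) = v := rho1_inv_apply D q v
    rw [hact] at h1
    rw [map_add, map_smul] at h1
    have h2 : D.ρ₁ q⁻¹ (D.α t) = D.α t := by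
      have h3 := congrArg (D.ρ₁ q⁻¹) hfix_t
      rw [rho1_inv_apply] at h3
      exact h3.symm
    rw [h2] at h1
    linear_combination (norm := module) h1
  have hgzero : ∀ s', g (D.α s') = 0 := by
    intro s'
    rcases eq_or_ne (D.α s') (D.α t) with h | h
    · rw [h]; exact hgt
    · by_contra hne
      rcases lt_or_gt_of_ne hne with hlt | hgt'
      · -- g < 0 : α s' + (2 g) α t is a root, contradiction
        apply simple_combo_not_root D h (show 2 * g (D.α s') < 0 by linarith)
        rw [← hact (D.α s')]
        exact phi1_stable D (alpha_mem_phi1 D s') q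
      · apply simple_combo_not_root D h (show -(2 * g (D.α s')) < 0 by linarith)
        have := hact_inv (D.α s')
        rw [show D.α s' - (2 * g (D.α s')) • D.α t
            = D.α s' + (-(2 * g (D.α s'))) • D.α t by module] at this
        rw [← this]
        exact phi1_stable D (alpha_mem_phi1 D s') q⁻¹
  have hfixall : ∀ s', D.ρ₁ q (D.α s') = D.α s' := by
    intro s'
    rw [hact, hgzero]; simp
  have hconj : ∃ u₀, u₀ * q * u₀⁻¹ = q⁻¹ := by
    refine ⟨D.r t, ?_⟩
    rw [hq, mul_inv_rev, refl_inv D hzphi, D.r_inv]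
    rw [show D.r t * (D.r t * D.refl₁ z) * D.r t = (D.r t * D.r t) * (D.refl₁ z * D.r t)
      by group, D.r_sq, one_mul]
  have hq1 : q = 1 := eq_one_of_fix D q hfixall hconj
  have : D.refl₁ z = D.r t := by
    have h1 : D.r t * q = D.r t := by rw [hq1, mul_one]
    rw [hq, ← mul_assoc, D.r_sq, one_mul] at h1
    exact h1
  rw [← this, hz, D.refl₁_eq]

/-- Proportional roots have equal reflections. -/
theorem refl_eq_of_proportional {z z' : V₁} (hz : z ∈ D.Phi₁) (hz' : z' ∈ D.Phi₁)
    {μ : ℝ} (h : z' = μ • z) : D.refl₁ z' = D.refl₁ z := by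
  obtain ⟨u, s, rfl⟩ := hz
  obtain ⟨u', s', hzz⟩ := hz'
  have h1 : D.ρ₁ (u⁻¹ * u') (D.α s') = μ • D.α s := by
    rw [rho1_mul, ← hzz, h, map_smul, rho1_inv_apply]
  have h2 := ray_lemma D h1
  rw [hzz, D.refl₁_eq, D.refl₁_eq]
  have := congrArg (fun g => u * g * u⁻¹) h2
  rw [← this]
  group

end RayLemma

end CoxeterDatum
namespace CoxeterDatum

section Length

variable {S V₁ V₂ W : Type*} [AddCommGroup V₁] [Module ℝ V₁]
  [AddCommGroup V₂] [Module ℝ V₂] [Group W]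

variable (D : CoxeterDatum S V₁ V₂ W)

theorem len_set_nonempty (w : W) :
    { n | ∃ l : List S, l.length = n ∧ (l.map D.r).prod = w }.Nonempty := by
  obtain ⟨l, hl⟩ := exists_word D w
  exact ⟨l.length, l, rfl, hl⟩

theorem exists_reduced (w : W) :
    ∃ l : List S, l.length = D.len w ∧ (l.map D.r).prod = w :=
  Nat.sInf_mem (len_set_nonempty D w)

theorem len_le {w : W} (l : List S) (hl : (l.map D.r).prod = w) :
    D.len w ≤ l.length :=
  Nat.sInf_le ⟨l, rfl, hl⟩

theorem len_one : D.len 1 = 0 :=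
  Nat.le_zero.1 (len_le D [] (by simp))

theorem eq_one_of_len_zero {w : W} (h : D.len w = 0) : w = 1 := by
  obtain ⟨l, hlen, hprod⟩ := exists_reduced D w
  rw [h, List.length_eq_zero_iff] at hlen
  rw [hlen] at hprod
  simpa using hprod.symm

theorem len_pos_of_ne_one {w : W} (h : w ≠ 1) : 0 < D.len w :=
  Nat.pos_of_ne_zero (fun hc => h (eq_one_of_len_zero D hc))

theorem len_r_mul_le (s : S) (w : W) : D.len (D.r s * w) ≤ D.len w + 1 := by
  obtain ⟨l, hlen, hprod⟩ := exists_reduced D w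
  have : ((s :: l).map D.r).prod = D.r s * w := by
    rw [List.map_cons, List.prod_cons, hprod]
  have h2 := len_le D _ this
  simpa [hlen] using h2

theorem first_letter {w : W} (h : w ≠ 1) :
    ∃ (s : S) (u : W), w = D.r s * u ∧ D.len u + 1 = D.len w := by
  obtain ⟨l, hlen, hprod⟩ := exists_reduced D w
  match l, hlen, hprod with
  | [], hlen, hprod => exact absurd (by simpa using hprod.symm) h
  | s :: l', hlen, hprod =>
    refine ⟨s, (l'.map D.r).prod, ?_, ?_⟩
    · rw [← hprod, List.map_cons, List.prod_cons]
    · have h1 : D.len ((l'.map D.r).prod) ≤ l'.length := len_le D l' rfl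
      have h2 : D.len w ≤ D.len ((l'.map D.r).prod) + 1 := by
        have := len_r_mul_le D s ((l'.map D.r).prod)
        rw [show D.r s * (l'.map D.r).prod = w by
          rw [← hprod, List.map_cons, List.prod_cons]] at this
        exact this
      have h3 : l'.length + 1 = D.len w := by
        rw [← hlen]; simp
      omega

/-- Criterion (one direction): if `w` sends the positive root `z` to a negative
root, then multiplying by the reflection of `z` decreases length. -/
theorem crit_neg_refl : ∀ (n : ℕ) (w : W), D.len w = n → ∀ {z : V₁},
    z ∈ D.PhiPos₁ → D.ρ₁ w z ∈ D.PhiNeg₁ →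
    D.len (w * D.refl₁ z) < D.len w := by
  intro n
  induction n using Nat.strong_induction_on with
  | _ n IH =>
    intro w hn z hz hneg
    have hw1 : w ≠ 1 := by
      intro h
      rw [h, rho1_one] at hneg
      exact pos_not_neg D hz hneg
    obtain ⟨s₁, u, hwu, hlen⟩ := first_letter D hw1
    have hzphi : z ∈ D.Phi₁ := hz.1
    have hz'phi : D.ρ₁ u z ∈ D.Phi₁ := phi1_stable D hzphi u
    have hlenu : D.len u < n := by omega
    rcases pos_or_neg D hz'phi with hpos | hneg'
    · -- u z positive, r s₁ flips it: u z is a multiple of α s₁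
      have hflip : D.ρ₁ (D.r s₁) (D.ρ₁ u z) ∈ D.PhiNeg₁ := by
        rw [← rho1_mul, ← hwu]
        exact hneg
      obtain ⟨c, hc0, hcz⟩ := flip_simple D hpos hflip
      have hrefl1 : D.refl₁ (D.ρ₁ u z) = D.r s₁ := by
        rw [refl_eq_of_proportional D (alpha_mem_phi1 D s₁) hz'phi hcz,
          refl_alpha]
      have hrefl2 : D.refl₁ (D.ρ₁ u z) = u * D.refl₁ z * u⁻¹ :=
        refl_conj D u hzphi
      have hkey : w * D.refl₁ z = u := by
        rw [hwu, ← hrefl1, hrefl2]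
        have hsq := refl_sq D hzphi
        group
        rw [mul_assoc, hsq, mul_one]
      rw [hkey]
      omega
    · -- u z negative: induction
      have h1 := IH (D.len u) hlenu u rfl hz hneg'
      have h2 : D.len (w * D.refl₁ z) ≤ D.len (u * D.refl₁ z) + 1 := by
        rw [hwu, mul_assoc]
        exact len_r_mul_le D s₁ (u * D.refl₁ z)
      omega

theorem crit_pos_refl {w : W} {z : V₁} (hz : z ∈ D.PhiPos₁)
    (hpos : D.ρ₁ w z ∈ D.PhiPos₁) : D.len w < D.len (w * D.refl₁ z) := by
  have h1 : D.ρ₁ (w * D.refl₁ z) z ∈ D.PhiNeg₁ := by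
    rw [rho1_mul, refl_neg_self D hz.1, map_neg, mem_neg_pos_iff, neg_neg]
    exact hpos
  have h2 := crit_neg_refl D _ (w * D.refl₁ z) rfl hz h1
  rw [mul_assoc, refl_sq D hz.1, mul_one] at h2
  exact h2

theorem mem_SW_mem {W' : Subgroup W} {t0 : W} (ht0 : t0 ∈ D.SW W') : t0 ∈ W' := by
  have h1 : t0 ∈ D.Nbar t0 ∩ (W' : Set W) := by
    rw [ht0.2]; rfl
  exact h1.2

/-- The key positivity lemma: a canonical generator of `W'` maps every positive
root of `W'` other than its own to a positive root. -/
theorem canonical_preserves_pos {W' : Subgroup W} {t0 : W} (ht0 : t0 ∈ D.SW W')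
    {z : V₁} (hz : z ∈ D.PhiPos₁) (hzW : D.refl₁ z ∈ W')
    (hne : D.refl₁ z ≠ t0) : D.ρ₁ t0 z ∈ D.PhiPos₁ := by
  rcases pos_or_neg D (phi1_stable D hz.1 t0) with h | h
  · exact h
  · exfalso
    apply hne
    have h1 : D.refl₁ z ∈ D.Nbar t0 ∩ (W' : Set W) :=
      ⟨⟨refl_mem_T D hz.1, crit_neg_refl D _ t0 rfl hz h⟩, hzW⟩
    rw [ht0.2] at h1
    exact h1

end Length

end CoxeterDatum
/-- The coefficient sequence of the alternating chain. -/
noncomputable def seqPQ (a b : ℝ) : ℕ → ℝ × ℝ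
  | 0 => (1, 0)
  | (k+1) =>
    if Even k then ((seqPQ a b k).1, -(2*a) * (seqPQ a b k).1 - (seqPQ a b k).2)
    else (-(seqPQ a b k).1 - (2*b) * (seqPQ a b k).2, (seqPQ a b k).2)

/-- The alternating word `⋯ t t' ⋅ 1` (new letters multiplied on the left,
starting with `t'`). -/
def chainW {W : Type*} [Group W] (t t' : W) : ℕ → W
  | 0 => 1
  | (k+1) => (if Even k then t' else t) * chainW t t' k

namespace CoxeterDatum

section Chain

variable {S V₁ V₂ W : Type*} [AddCommGroup V₁] [Module ℝ V₁]
  [AddCommGroup V₂] [Module ℝ V₂] [Group W]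

variable (D : CoxeterDatum S V₁ V₂ W)

/-- The alternating chain of roots starting at `x`, applying `t'` then `t` etc. -/
noncomputable def chainV (t t' : W) (x : V₁) : ℕ → V₁
  | 0 => x
  | (k+1) => D.ρ₁ (if Even k then t' else t) (chainV t t' x k)

variable {W' : Subgroup W} {x y : V₁}

theorem chainV_rho (t t' : W) (k : ℕ) :
    chainV D t t' x k = D.ρ₁ (chainW t t' k) x := by
  induction k with
  | zero => simp [chainV, chainW, rho1_one]
  | succ k ih => rw [chainV, chainW, ih, rho1_mul]

theorem chainV_mem_phi1 (t t' : W) (hx : x ∈ D.Phi₁) (k : ℕ) :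
    chainV D t t' x k ∈ D.Phi₁ := by
  rw [chainV_rho]
  exact phi1_stable D hx _

section WithPair

theorem chainV_coords (hx : x ∈ D.Delta₁ W') (hy : y ∈ D.Delta₁ W') (k : ℕ) :
    chainV D (D.refl₁ x) (D.refl₁ y) x k
      = (seqPQ (D.pair x (D.phi y)) (D.pair y (D.phi x)) k).1 • x
        + (seqPQ (D.pair x (D.phi y)) (D.pair y (D.phi x)) k).2 • y := by
  set a := D.pair x (D.phi y)
  set b := D.pair y (D.phi x)
  induction k with
  | zero => simp [chainV, seqPQ]
  | succ k ih =>
    rw [chainV, ih, seqPQ]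
    rcases Nat.even_or_odd k with he | ho
    · rw [if_pos he]
      rw [if_pos he]
      rw [map_add, map_smul, map_smul,
        refl_act' D hy.1.1 x, refl_neg_self D hy.1.1]
      module
    · rw [if_neg (Nat.not_even_iff_odd.2 ho)]
      rw [if_neg (Nat.not_even_iff_odd.2 ho)]
      rw [map_add, map_smul, map_smul, refl_act' D hx.1.1 y, refl_neg_self D hx.1.1]
      module

theorem chainW_mem (hx : x ∈ D.Delta₁ W') (hy : y ∈ D.Delta₁ W') (k : ℕ) : chainW (D.refl₁ x) (D.refl₁ y) k ∈ W' := by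
  induction k with
  | zero => exact Subgroup.one_mem W'
  | succ k ih =>
    rw [chainW]
    refine Subgroup.mul_mem _ ?_ ih
    split
    · exact mem_SW_mem D hy.2
    · exact mem_SW_mem D hx.2

theorem refl_chainV (hx : x ∈ D.Delta₁ W') (k : ℕ) :
    D.refl₁ (chainV D (D.refl₁ x) (D.refl₁ y) x k)
      = chainW (D.refl₁ x) (D.refl₁ y) k * D.refl₁ x
        * (chainW (D.refl₁ x) (D.refl₁ y) k)⁻¹ := by
  rw [chainV_rho]
  exact refl_conj D _ hx.1.1

/-- The key group identity for detecting when the chain stops. -/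
theorem chainW_conj_identity (hx : x ∈ D.Delta₁ W') (hy : y ∈ D.Delta₁ W') (k : ℕ) :
    chainW (D.refl₁ x) (D.refl₁ y) k * D.refl₁ x
      * (chainW (D.refl₁ x) (D.refl₁ y) k)⁻¹
      * (if Even k then D.refl₁ y else D.refl₁ x)
    = if Even k then (D.refl₁ x * D.refl₁ y)^(k+1)
      else ((D.refl₁ x * D.refl₁ y)⁻¹)^(k+1) := by
  set t := D.refl₁ x with hht
  set t' := D.refl₁ y with hht'
  have ht2 : t * t = 1 := refl_sq D hx.1.1
  have ht'2 : t' * t' = 1 := refl_sq D hy.1.1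
  have htinv : t⁻¹ = t := inv_eq_of_mul_eq_one_right ht2
  have ht'inv : t'⁻¹ = t' := inv_eq_of_mul_eq_one_right ht'2
  have hconjt' : ∀ m : ℕ, t' * (t * t')^m * t' = ((t * t')⁻¹)^m := by
    intro m
    have h1 : t' * (t * t') * t'⁻¹ = (t * t')⁻¹ := by
      rw [ht'inv, mul_inv_rev, htinv, ht'inv]
      calc t' * (t * t') * t' = t' * t * (t' * t') := by group
      _ = t' * t := by rw [ht'2, mul_one]
    calc t' * (t * t')^m * t' = t' * (t * t')^m * t'⁻¹ := by rw [ht'inv]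
    _ = (t' * (t * t') * t'⁻¹)^m := (conj_pow ..).symm
    _ = ((t * t')⁻¹)^m := by rw [h1]
  have hconjt : ∀ m : ℕ, t * ((t * t')⁻¹)^m * t = (t * t')^m := by
    intro m
    have h1 : t * (t * t')⁻¹ * t⁻¹ = t * t' := by
      rw [htinv, mul_inv_rev, htinv, ht'inv]
      calc t * (t' * t) * t = t * t' * (t * t) := by group
      _ = t * t' := by rw [ht2, mul_one]
    calc t * ((t * t')⁻¹)^m * t = t * ((t * t')⁻¹)^m * t⁻¹ := by rw [htinv]
    _ = (t * (t * t')⁻¹ * t⁻¹)^m := (conj_pow ..).symm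
    _ = (t * t')^m := by rw [h1]
  induction k with
  | zero => simp [chainW, pow_one]
  | succ k ih =>
    have hins : ∀ g : W, g * t = (g * t') * (t' * t) := by
      intro g
      rw [mul_assoc, ← mul_assoc t' t' t, ht'2, one_mul]
    have hins' : ∀ g : W, g * t' = (g * t) * (t * t') := by
      intro g
      rw [mul_assoc, ← mul_assoc t t t', ht2, one_mul]
    rcases Nat.even_or_odd k with he | ho
    · have hne1 : ¬ Even (k+1) := by simp [Nat.even_add_one, he]
      have hstep : chainW t t' (k+1) * t * (chainW t t' (k+1))⁻¹
          * (if Even (k+1) then t' else t)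
          = t' * (chainW t t' k * t * (chainW t t' k)⁻¹
              * (if Even k then t' else t)) * t := by
        rw [chainW, if_pos he, if_neg hne1, mul_inv_rev, ht'inv]
        group
      rw [hstep, ih, if_pos he, if_neg hne1]
      calc t' * (t * t')^(k+1) * t
          = (t' * (t * t')^(k+1) * t') * (t' * t) := hins _
      _ = ((t * t')⁻¹)^(k+1) * (t * t')⁻¹ := by
            rw [hconjt', mul_inv_rev, htinv, ht'inv]
      _ = ((t * t')⁻¹)^(k+2) := by rw [← pow_succ]
    · have hne := Nat.not_even_iff_odd.2 ho
      have hpos1 : Even (k+1) := Nat.even_add_one.2 hne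
      have hstep : chainW t t' (k+1) * t * (chainW t t' (k+1))⁻¹
          * (if Even (k+1) then t' else t)
          = t * (chainW t t' k * t * (chainW t t' k)⁻¹
              * (if Even k then t' else t)) * t' := by
        rw [chainW, if_neg hne, if_pos hpos1, mul_inv_rev, htinv]
        group
      rw [hstep, ih, if_neg hne, if_pos hpos1]
      calc t * ((t * t')⁻¹)^(k+1) * t'
          = (t * ((t * t')⁻¹)^(k+1) * t) * (t * t') := hins' _
      _ = (t * t')^(k+1) * (t * t') := by rw [hconjt]
      _ = (t * t')^(k+2) := by rw [← pow_succ]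

/-- Stop criterion : the reflection of the `k`-th chain root equals the next
letter iff `(t t')^(k+1) = 1`. -/
theorem chain_stop_iff (hx : x ∈ D.Delta₁ W') (hy : y ∈ D.Delta₁ W') (k : ℕ) :
    D.refl₁ (chainV D (D.refl₁ x) (D.refl₁ y) x k)
        = (if Even k then D.refl₁ y else D.refl₁ x)
      ↔ (D.refl₁ x * D.refl₁ y)^(k+1) = 1 := by
  set t := D.refl₁ x
  set t' := D.refl₁ y
  have hσ2 : (if Even k then t' else t) * (if Even k then t' else t) = 1 := by
    split
    · exact refl_sq D hy.1.1
    · exact refl_sq D hx.1.1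
  rw [refl_chainV D hx]
  constructor
  · intro h
    have h2 := chainW_conj_identity D hx hy k
    rw [h, hσ2] at h2
    rcases Nat.even_or_odd k with he | ho
    · rw [if_pos he] at h2
      exact h2.symm
    · rw [if_neg (Nat.not_even_iff_odd.2 ho)] at h2
      rw [← inv_eq_one, ← inv_pow]
      exact h2.symm
  · intro h
    have h2 := chainW_conj_identity D hx hy k
    have h3 : (if Even k then (t * t')^(k+1) else ((t * t')⁻¹)^(k+1)) = 1 := by
      split
      · exact h
      · rw [inv_pow, inv_eq_one]; exact h
    rw [h3] at h2
    have h4 := congrArg (fun g => g * (if Even k then t' else t)) h2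
    simp only [one_mul] at h4
    rw [mul_assoc, hσ2, mul_one] at h4
    exact h4

/-- Chain positivity: as long as no stop has occurred, the chain roots are
positive. -/
theorem chain_pos (hx : x ∈ D.Delta₁ W') (hy : y ∈ D.Delta₁ W') (k : ℕ)
    (hstop : ∀ j, j < k → (D.refl₁ x * D.refl₁ y)^(j+1) ≠ 1) :
    chainV D (D.refl₁ x) (D.refl₁ y) x k ∈ D.PhiPos₁ := by
  induction k with
  | zero => exact hx.1
  | succ k ih =>
    have hk := ih (fun j hj => hstop j (Nat.lt_succ_of_lt hj))
    rw [chainV]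
    have hmem : D.refl₁ (chainV D (D.refl₁ x) (D.refl₁ y) x k) ∈ W' := by
      rw [refl_chainV D hx]
      exact Subgroup.mul_mem _ (Subgroup.mul_mem _ (chainW_mem D hx hy k)
        (mem_SW_mem D hx.2)) (Subgroup.inv_mem _ (chainW_mem D hx hy k))
    have hne : D.refl₁ (chainV D (D.refl₁ x) (D.refl₁ y) x k)
        ≠ (if Even k then D.refl₁ y else D.refl₁ x) := by
      intro h
      exact hstop k (Nat.lt_succ_self k) ((chain_stop_iff D hx hy k).1 h)
    rcases Nat.even_or_odd k with he | ho
    · rw [if_pos he]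
      rw [if_pos he] at hne
      exact canonical_preserves_pos D hy.2 hk hmem hne
    · rw [if_neg (Nat.not_even_iff_odd.2 ho)]
      rw [if_neg (Nat.not_even_iff_odd.2 ho)] at hne
      exact canonical_preserves_pos D hx.2 hk hmem hne

end WithPair

end Chain

end CoxeterDatum
section SeqAnalysis

open Real

theorem seqPQ_zero (a b : ℝ) : seqPQ a b 0 = (1, 0) := rfl

theorem seqPQ_succ_even (a b : ℝ) {k : ℕ} (he : Even k) :
    seqPQ a b (k+1) = ((seqPQ a b k).1, -(2*a) * (seqPQ a b k).1 - (seqPQ a b k).2) := by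
  rw [seqPQ, if_pos he]

theorem seqPQ_succ_odd (a b : ℝ) {k : ℕ} (ho : ¬ Even k) :
    seqPQ a b (k+1) = (-(seqPQ a b k).1 - (2*b) * (seqPQ a b k).2, (seqPQ a b k).2) := by
  rw [seqPQ, if_neg ho]

theorem seqPQ_one (a b : ℝ) : seqPQ a b 1 = (1, -(2*a)) := by
  rw [seqPQ_succ_even a b (Even.zero), seqPQ_zero]
  norm_num

theorem seqPQ_two (a b : ℝ) : seqPQ a b 2 = (4*(a*b) - 1, -(2*a)) := by
  rw [seqPQ_succ_odd a b (by simp), seqPQ_one]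
  norm_num
  ring

/-- The trigonometric closed form of the coefficient sequences. -/
theorem seqPQ_trig {a b θ : ℝ} (hθ1 : 0 < θ) (hθ2 : θ < π/2)
    (hc : Real.cos θ ^ 2 = a * b) : ∀ k : ℕ,
    (seqPQ a b k).1 * Real.sin θ
        = Real.sin (((if Even k then k+1 else k : ℕ)) * θ) ∧
    (seqPQ a b k).2 * (Real.sin θ * Real.cos θ)
        = (-a) * Real.sin (((if Even k then k else k+1 : ℕ)) * θ) := by
  have hs : 0 < Real.sin θ :=
    Real.sin_pos_of_pos_of_lt_pi hθ1 (by linarith [Real.pi_pos])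
  have hco : 0 < Real.cos θ := Real.cos_pos_of_mem_Ioo ⟨by linarith [Real.pi_pos], hθ2⟩
  have key : ∀ m : ℕ, Real.sin ((m+2 : ℕ) * θ)
      = 2 * Real.cos θ * Real.sin ((m+1 : ℕ) * θ) - Real.sin (m * θ) := by
    intro m
    have h1 : ((m+2 : ℕ) : ℝ) * θ = ((m+1 : ℕ) : ℝ) * θ + θ := by push_cast; ring
    have h2 : (m : ℝ) * θ = ((m+1 : ℕ) : ℝ) * θ - θ := by push_cast; ring
    rw [h1, h2, Real.sin_add, Real.sin_sub]
    ring
  intro k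
  induction k with
  | zero =>
    constructor
    · simp [seqPQ_zero]
    · simp [seqPQ_zero]
  | succ k ih =>
    obtain ⟨ihp, ihq⟩ := ih
    rcases Nat.even_or_odd k with he | ho
    · have hne : ¬ Even (k+1) := by simp [Nat.even_add_one, he]
      rw [if_pos he] at ihp ihq
      rw [seqPQ_succ_even a b he]
      refine ⟨by rw [if_neg hne]; exact ihp, ?_⟩
      rw [if_neg hne]
      have expand : (-(2*a) * (seqPQ a b k).1 - (seqPQ a b k).2) * (Real.sin θ * Real.cos θ)
          = -(2*a) * ((seqPQ a b k).1 * Real.sin θ) * Real.cos θ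
            - (seqPQ a b k).2 * (Real.sin θ * Real.cos θ) := by ring
      rw [expand, ihp, ihq, key k]
      push_cast
      ring
    · have hne := Nat.not_even_iff_odd.2 ho
      have hev : Even (k+1) := Nat.even_add_one.2 hne
      rw [if_neg hne] at ihp ihq
      rw [seqPQ_succ_odd a b hne]
      refine ⟨?_, by rw [if_pos hev]; exact ihq⟩
      rw [if_pos hev]
      have expand : (-(seqPQ a b k).1 - (2*b) * (seqPQ a b k).2) * Real.sin θ * Real.cos θ
          = -((seqPQ a b k).1 * Real.sin θ) * Real.cos θ
            - (2*b) * ((seqPQ a b k).2 * (Real.sin θ * Real.cos θ)) := by ring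
      have hmul : (-(seqPQ a b k).1 - (2*b) * (seqPQ a b k).2) * Real.sin θ * Real.cos θ
          = Real.sin ((k+1+1 : ℕ) * θ) * Real.cos θ := by
        rw [expand, ihp, ihq, key k]
        push_cast
        linear_combination (-2 * Real.sin (((k:ℝ) + 1) * θ)) * hc
      exact mul_right_cancel₀ (ne_of_gt hco) hmul

theorem pi_facts : (0:ℝ) < π := Real.pi_pos

/-- There is always a `k` with both `sin kθ ≤ 0` and `sin (k+1)θ ≤ 0`, with
control on the size of `k`. -/
theorem exists_double_nonpos {θ : ℝ} (h1 : 0 < θ) (h2 : θ < π/2) :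
    ∃ k : ℕ, 1 ≤ k ∧ (k:ℝ) < π/θ + 1 ∧
      Real.sin (k * θ) ≤ 0 ∧ Real.sin ((k+1 : ℕ) * θ) ≤ 0 := by
  have hπ := Real.pi_pos
  set k := ⌈π/θ⌉₊ with hk
  have hk1 : (π/θ : ℝ) ≤ k := Nat.le_ceil _
  have hk2 : (k:ℝ) < π/θ + 1 := Nat.ceil_lt_add_one (by positivity)
  have hkθ1 : π ≤ k * θ := by
    rw [div_le_iff₀ h1] at hk1
    linarith
  have hkθ2 : (k:ℝ) * θ < π + θ := by
    have := mul_lt_mul_of_pos_right hk2 h1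
    rw [add_mul, div_mul_cancel₀ _ (ne_of_gt h1)] at this
    linarith
  have hsin1 : Real.sin (k * θ) ≤ 0 := by
    have h3 : Real.sin ((k:ℝ) * θ - π) = -Real.sin ((k:ℝ) * θ) := by
      rw [Real.sin_sub, Real.sin_pi, Real.cos_pi]
      ring
    have h4 : 0 ≤ Real.sin ((k:ℝ) * θ - π) :=
      Real.sin_nonneg_of_nonneg_of_le_pi (by linarith) (by linarith)
    linarith [h3 ▸ h4]
  have hsin2 : Real.sin ((k+1:ℕ) * θ) ≤ 0 := by
    have hc : ((k+1:ℕ):ℝ) * θ = (k:ℝ)*θ + θ := by push_cast; ring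
    have h3 : Real.sin ((k:ℝ) * θ + θ - π) = -Real.sin ((k:ℝ) * θ + θ) := by
      rw [Real.sin_sub, Real.sin_pi, Real.cos_pi]
      ring
    have h4 : 0 ≤ Real.sin ((k:ℝ) * θ + θ - π) :=
      Real.sin_nonneg_of_nonneg_of_le_pi (by linarith) (by linarith)
    rw [hc]
    linarith [h3 ▸ h4]
  refine ⟨k, ?_, hk2, hsin1, hsin2⟩
  have : (1:ℝ) ≤ π/θ := by
    rw [le_div_iff₀ h1]
    linarith
  have : (1:ℝ) ≤ (k:ℝ) := le_trans this hk1
  exact_mod_cast this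

/-- Sign extraction from the closed form. -/
theorem seqPQ_nonpos_of_sin {a b θ : ℝ} (ha : a < 0) (hθ1 : 0 < θ)
    (hθ2 : θ < π/2) (hc : Real.cos θ ^ 2 = a * b) {k : ℕ}
    (hs1 : Real.sin (k * θ) ≤ 0) (hs2 : Real.sin ((k+1:ℕ) * θ) ≤ 0) :
    (seqPQ a b k).1 ≤ 0 ∧ (seqPQ a b k).2 ≤ 0 := by
  have hs : 0 < Real.sin θ :=
    Real.sin_pos_of_pos_of_lt_pi hθ1 (by linarith [Real.pi_pos])
  have hco : 0 < Real.cos θ := Real.cos_pos_of_mem_Ioo ⟨by linarith [Real.pi_pos], hθ2⟩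
  obtain ⟨hp, hq⟩ := seqPQ_trig hθ1 hθ2 hc k
  have hkey : ∀ u v : ℝ, 0 < v → u * v ≤ 0 → u ≤ 0 := fun u v hv huv => by nlinarith
  rcases Nat.even_or_odd k with he | ho
  · rw [if_pos he] at hp hq
    constructor
    · exact hkey _ _ hs (by rw [hp]; exact hs2)
    · exact hkey _ _ (mul_pos hs hco)
        (by rw [hq]; exact mul_nonpos_of_nonneg_of_nonpos (by linarith) hs1)
  · rw [if_neg (Nat.not_even_iff_odd.2 ho)] at hp hq
    constructor
    · exact hkey _ _ hs (by rw [hp]; exact hs1)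
    · exact hkey _ _ (mul_pos hs hco)
        (by rw [hq]; exact mul_nonpos_of_nonneg_of_nonpos (by linarith) hs2)

end SeqAnalysis
section Hyperbolic

theorem seqPQ_pos_of_one_le {a b : ℝ} (ha : a < 0) (hb : b < 0) (hab : 1 ≤ a*b) :
    ∀ k, 1 ≤ k → 0 < (seqPQ a b k).1 ∧ 0 < (seqPQ a b k).2 := by
  set m : ℕ → ℝ := fun k => if Even k then (seqPQ a b k).1 else (seqPQ a b k).2
    with hm
  set coef : ℕ → ℝ := fun k => if Even k then -(2*a) else -(2*b) with hcoef
  have hcoefpos : ∀ k, 0 < coef k := by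
    intro k
    rw [hcoef]
    dsimp only
    split
    · linarith
    · linarith
  have hcoefmul : ∀ k, coef k * coef (k+1) = 4*(a*b) := by
    intro k
    rw [hcoef]
    dsimp only
    rcases Nat.even_or_odd k with he | ho
    · rw [if_pos he, if_neg (by simp [Nat.even_add_one, he])]
      ring
    · have hne := Nat.not_even_iff_odd.2 ho
      rw [if_neg hne, if_pos (Nat.even_add_one.2 hne)]
      ring
  have hrec : ∀ k, m (k+2) = coef (k+1) * m (k+1) - m k := by
    intro k
    rw [hm, hcoef]
    dsimp only
    rcases Nat.even_or_odd k with he | ho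
    · have hne1 : ¬ Even (k+1) := by simp [Nat.even_add_one, he]
      have he2 : Even (k+2) := by
        rcases he with ⟨j, rfl⟩
        exact ⟨j+1, by ring⟩
      rw [if_pos he, if_neg hne1, if_pos he2, if_neg hne1]
      rw [seqPQ_succ_odd a b hne1, seqPQ_succ_even a b he]
      try dsimp only
      try ring
    · have hne := Nat.not_even_iff_odd.2 ho
      have he1 : Even (k+1) := Nat.even_add_one.2 hne
      have hne2 : ¬ Even (k+2) := by
        simp [Nat.even_add_one, Nat.even_add_one.2 hne]
      rw [if_neg hne, if_pos he1, if_neg hne2, if_pos he1]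
      rw [seqPQ_succ_even a b he1, seqPQ_succ_odd a b hne]
      try dsimp only
      try ring
  have hm0 : m 0 = 1 := by rw [hm]; simp [seqPQ_zero]
  have hm1 : m 1 = -(2*a) := by
    have h1 : ¬ Even 1 := by decide
    rw [hm]
    dsimp only
    rw [if_neg h1, seqPQ_one]
  have J : ∀ k, 0 < m k ∧ 0 < m (k+1) ∧ coef k * m k ≤ 2 * m (k+1) := by
    intro k
    induction k with
    | zero =>
      refine ⟨by rw [hm0]; norm_num, by rw [hm1]; linarith, ?_⟩
      have hc0 : coef 0 = -(2*a) := by rw [hcoef]; simp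
      rw [hc0, hm0, hm1]
      linarith
    | succ k ih =>
      obtain ⟨h1, h2, h3⟩ := ih
      have hrk := hrec k
      have hcp := hcoefpos k
      have hcp1 := hcoefpos (k+1)
      have hcm := hcoefmul k
      constructor
      · exact h2
      constructor
      · -- 0 < m (k+2)
        nlinarith [mul_le_mul_of_nonneg_left h3 (le_of_lt hcp1),
          mul_pos hcp1 h2, mul_pos hcp h2]
      · -- coef (k+1) * m (k+1) ≤ 2 * m (k+2)
        nlinarith [mul_le_mul_of_nonneg_left h3 (le_of_lt hcp1),
          mul_pos hcp1 h2]
  have hppres : ∀ k, Even k → (seqPQ a b (k+1)).1 = (seqPQ a b k).1 := by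
    intro k he
    rw [seqPQ_succ_even a b he]
  have hqpres : ∀ k, ¬ Even k → (seqPQ a b (k+1)).2 = (seqPQ a b k).2 := by
    intro k ho
    rw [seqPQ_succ_odd a b ho]
  rintro (_ | j) hk
  · omega
  · rcases Nat.even_or_odd j with he | ho
    · have hne1 : ¬ Even (j+1) := by simp [Nat.even_add_one, he]
      constructor
      · rw [hppres j he]
        have := (J j).1
        simpa only [hm, if_pos he] using this
      · have := (J j).2.1
        simpa only [hm, if_neg hne1] using this
    · have hne := Nat.not_even_iff_odd.2 ho
      have he1 : Even (j+1) := Nat.even_add_one.2 hne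
      constructor
      · have := (J j).2.1
        simpa only [hm, if_pos he1] using this
      · rw [hqpres j hne]
        have := (J j).1
        simpa only [hm, if_neg hne] using this

end Hyperbolic
namespace CoxeterDatum

section MainHelpers

variable {S V₁ V₂ W : Type*} [AddCommGroup V₁] [Module ℝ V₁]
  [AddCommGroup V₂] [Module ℝ V₂] [Group W]

variable (D : CoxeterDatum S V₁ V₂ W) {W' : Subgroup W} {x y : V₁}

theorem indep (hx : x ∈ D.Phi₁) (hy : y ∈ D.Phi₁)
    (hxy : D.refl₁ x ≠ D.refl₁ y) :
    ∀ p q : ℝ, p • x + q • y = 0 → p = 0 ∧ q = 0 := by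
  intro p q h
  by_cases hq : q = 0
  · refine ⟨?_, hq⟩
    rw [hq, zero_smul, add_zero] at h
    rcases smul_eq_zero.1 h with h1 | h1
    · exact h1
    · exact absurd h1 (root_ne_zero D hx)
  · exfalso
    have h2 : y = (q⁻¹ * (-p)) • x := by
      have h3 : q • y = (-p) • x := by
        linear_combination (norm := module) h
      calc y = q⁻¹ • (q • y) := by rw [smul_smul, inv_mul_cancel₀ hq, one_smul]
      _ = q⁻¹ • ((-p) • x) := by rw [h3]
      _ = (q⁻¹ * (-p)) • x := by rw [smul_smul]
    exact hxy (refl_eq_of_proportional D hx hy h2).symm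

theorem kill_nonpos (hx : x ∈ D.PhiPos₁) (hy : y ∈ D.PhiPos₁) {z : V₁}
    (hz : z ∈ D.PhiPos₁) {p q : ℝ} (hzc : z = p • x + q • y)
    (hp : p ≤ 0) (hq : q ≤ 0) : False := by
  have h0 : z + (-p) • x + (-q) • y = 0 := by rw [hzc]; module
  have hplc : z + (-p) • x + (-q) • y ∈ PLC (Set.range D.α) := by
    have s1 : z + (-p) • x ∈ PLC (Set.range D.α) := by
      rcases hp.lt_or_eq with h | h
      · exact plc_add hz.2 (plc_smul (by linarith) hx.2)
      · rw [h]; simpa using hz.2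
    rcases hq.lt_or_eq with h | h
    · exact plc_add s1 (plc_smul (by linarith) hy.2)
    · rw [h]; simpa using s1
  rw [h0] at hplc
  exact D.D2a hplc

theorem sq_one_of_pair_zero (hx : x ∈ D.Phi₁) (hy : y ∈ D.Phi₁)
    (h : D.pair x (D.phi y) = 0) :
    (D.refl₁ x * D.refl₁ y) * (D.refl₁ x * D.refl₁ y) = 1 := by
  have h1 : D.ρ₁ (D.refl₁ y) x = x := by
    rw [refl_act' D hy x, h]
    norm_num
  have h2 := refl_conj D (D.refl₁ y) hx
  rw [h1, refl_inv] at h2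
  · -- h2 : D.refl₁ x = t' * t * t'
    have h3 : D.refl₁ y * D.refl₁ x * D.refl₁ y = D.refl₁ x := h2.symm
    calc (D.refl₁ x * D.refl₁ y) * (D.refl₁ x * D.refl₁ y)
        = D.refl₁ x * (D.refl₁ y * D.refl₁ x * D.refl₁ y) := by group
    _ = D.refl₁ x * D.refl₁ x := by rw [h3]
    _ = 1 := refl_sq D hx
  · exact hy

theorem rho_pi_x (hx : x ∈ D.Phi₁) (hy : y ∈ D.Phi₁) :
    D.ρ₁ (D.refl₁ x * D.refl₁ y) x
      = (4*(D.pair x (D.phi y) * D.pair y (D.phi x)) - 1) • x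
        + (-(2 * D.pair x (D.phi y))) • y := by
  rw [rho1_mul, refl_act' D hy x, map_sub, map_smul, refl_neg_self D hx,
    refl_act' D hx y]
  module

theorem rho_pi_y (hx : x ∈ D.Phi₁) (hy : y ∈ D.Phi₁) :
    D.ρ₁ (D.refl₁ x * D.refl₁ y) y
      = (2 * D.pair y (D.phi x)) • x + (-1 : ℝ) • y := by
  rw [rho1_mul, refl_neg_self D hy, map_neg, refl_act' D hx y]
  module

theorem ab_zero_of_sq (hx : x ∈ D.Phi₁) (hy : y ∈ D.Phi₁)
    (hxy : D.refl₁ x ≠ D.refl₁ y)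
    (hsq : (D.refl₁ x * D.refl₁ y) * (D.refl₁ x * D.refl₁ y) = 1) :
    D.pair x (D.phi y) = 0 ∧ D.pair y (D.phi x) = 0 := by
  have hπx := rho_pi_x D hx hy
  have hπy := rho_pi_y D hx hy
  set a := D.pair x (D.phi y) with ha
  set b := D.pair y (D.phi x) with hb
  have hx2 : D.ρ₁ (D.refl₁ x * D.refl₁ y) (D.ρ₁ (D.refl₁ x * D.refl₁ y) x) = x := by
    rw [← rho1_mul, hsq, rho1_one]
  rw [hπx, map_add, map_smul, map_smul, hπx, hπy] at hx2
  have ex : ((4*(a*b) - 1)*(4*(a*b) - 1) + (-(2*a))*(2*b) - 1) • x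
      + ((4*(a*b) - 1)*(-(2*a)) + (-(2*a))*(-1)) • y = 0 := by
    linear_combination (norm := module) hx2
  have hy2 : D.ρ₁ (D.refl₁ x * D.refl₁ y) (D.ρ₁ (D.refl₁ x * D.refl₁ y) y) = y := by
    rw [← rho1_mul, hsq, rho1_one]
  rw [hπy, map_add, map_smul, map_smul, hπx, hπy] at hy2
  have ey : ((2*b)*(4*(a*b) - 1) + (-1:ℝ)*(2*b)) • x
      + ((2*b)*(-(2*a)) + (-1:ℝ)*(-1) - 1) • y = 0 := by
    linear_combination (norm := module) hy2
  obtain ⟨e1, e2⟩ := indep D hx hy hxy _ _ ex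
  obtain ⟨e3, e4⟩ := indep D hx hy hxy _ _ ey
  constructor <;> nlinarith [e1, e2, e3, e4]

theorem stop_transfer {t t' : W} (m : ℕ) (h : (t * t')^m ≠ 1)
    (ht : t * t = 1) (ht' : t' * t' = 1) : (t' * t)^m ≠ 1 := by
  intro hc
  apply h
  have h1 : (t' * t) = (t * t')⁻¹ := by
    rw [mul_inv_rev, inv_eq_of_mul_eq_one_right ht, inv_eq_of_mul_eq_one_right ht']
  rw [h1, inv_pow, inv_eq_one] at hc
  exact hc

/-- Part (1) of the main theorem, as a standalone lemma. -/
theorem a_nonpos (hx : x ∈ D.Delta₁ W') (hy : y ∈ D.Delta₁ W')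
    (hxy : D.refl₁ x ≠ D.refl₁ y) : D.pair x (D.phi y) ≤ 0 := by
  by_contra hpos
  push_neg at hpos
  have hxPhi : x ∈ D.Phi₁ := hx.1.1
  have hyPhi : y ∈ D.Phi₁ := hy.1.1
  have ht2 : D.refl₁ x * D.refl₁ x = 1 := refl_sq D hxPhi
  have ht'2 : D.refl₁ y * D.refl₁ y = 1 := refl_sq D hyPhi
  have h1 : D.refl₁ x * D.refl₁ y ≠ 1 := by
    intro h
    apply hxy
    have := congrArg (fun g => g * D.refl₁ y) h
    simp only [one_mul] at this
    rw [mul_assoc, ht'2, mul_one] at this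
    exact this
  rcases eq_or_ne ((D.refl₁ x * D.refl₁ y) * (D.refl₁ x * D.refl₁ y)) 1 with hsq | hsq
  · obtain ⟨h0, _⟩ := ab_zero_of_sq D hxPhi hyPhi hxy hsq
    linarith
  · have hstop2 : ∀ j, j < 2 → (D.refl₁ x * D.refl₁ y)^(j+1) ≠ 1 := by
      intro j hj
      interval_cases j
      · simpa using h1
      · rw [pow_two]
        exact hsq
    have hζ1 := chain_pos D hx hy 1 (fun j hj => hstop2 j (Nat.lt_succ_of_lt hj))
    have hζ2 := chain_pos D hx hy 2 hstop2
    have hζ'1 := chain_pos D hy hx 1 (by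
      intro j hj
      exact stop_transfer (j+1) (hstop2 j (Nat.lt_succ_of_lt hj)) ht2 ht'2)
    have hc1 := chainV_coords D hx hy 1
    rw [seqPQ_one] at hc1
    dsimp only at hc1
    have hc'1 := chainV_coords D hy hx 1
    rw [seqPQ_one] at hc'1
    dsimp only at hc'1
    rcases le_or_gt (1/4 : ℝ) (D.pair x (D.phi y) * D.pair y (D.phi x)) with hcge | hclt
    · -- combination kill
      have hcombo : chainV D (D.refl₁ x) (D.refl₁ y) x 1
          + (2 * D.pair x (D.phi y)) • chainV D (D.refl₁ y) (D.refl₁ x) y 1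
          + (4*(D.pair x (D.phi y) * D.pair y (D.phi x)) - 1) • x = 0 := by
        rw [hc1, hc'1]
        module
      have hplc : chainV D (D.refl₁ x) (D.refl₁ y) x 1
          + (2 * D.pair x (D.phi y)) • chainV D (D.refl₁ y) (D.refl₁ x) y 1
          + (4*(D.pair x (D.phi y) * D.pair y (D.phi x)) - 1) • x
          ∈ PLC (Set.range D.α) := by
        have p1 := hζ1.2
        have p2 := plc_smul (show (0:ℝ) < 2 * D.pair x (D.phi y) by linarith) hζ'1.2
        rcases hcge.lt_or_eq with hlt | heq
        · exact plc_add (plc_add p1 p2) (plc_smul (by linarith) hx.1.2)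
        · rw [show (4*(D.pair x (D.phi y) * D.pair y (D.phi x)) - 1 : ℝ) = 0 by
            linarith, zero_smul, add_zero]
          exact plc_add p1 p2
      rw [hcombo] at hplc
      exact D.D2a hplc
    · -- ζ₂ kill : coordinates (4ab − 1, −2a) both negative
      have hc2 := chainV_coords D hx hy 2
      rw [seqPQ_two] at hc2
      dsimp only at hc2
      exact kill_nonpos D hx.1 hy.1 hζ2 hc2 (by linarith) (by linarith)

end MainHelpers

end CoxeterDatum
namespace CoxeterDatum

section Endpoint

variable {S V₁ V₂ W : Type*} [AddCommGroup V₁] [Module ℝ V₁]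
  [AddCommGroup V₂] [Module ℝ V₂] [Group W]

variable (D : CoxeterDatum S V₁ V₂ W) {W' : Subgroup W} {x y : V₁}

theorem endpoint_coords (hx : x ∈ D.Delta₁ W') (hy : y ∈ D.Delta₁ W')
    (hxy : D.refl₁ x ≠ D.refl₁ y) {n : ℕ} (hn2 : 2 ≤ n)
    (hord : orderOf (D.refl₁ x * D.refl₁ y) = n) :
    ((seqPQ (D.pair x (D.phi y)) (D.pair y (D.phi x)) (n-1)).1 = 0
        ∧ 0 < (seqPQ (D.pair x (D.phi y)) (D.pair y (D.phi x)) (n-1)).2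
        ∧ Even (n-1))
      ∨ (0 < (seqPQ (D.pair x (D.phi y)) (D.pair y (D.phi x)) (n-1)).1
        ∧ (seqPQ (D.pair x (D.phi y)) (D.pair y (D.phi x)) (n-1)).2 = 0
        ∧ ¬ Even (n-1)) := by
  have hstopfree : ∀ j, j < n - 1 → (D.refl₁ x * D.refl₁ y)^(j+1) ≠ 1 := by
    intro j hj hc
    have h1 := orderOf_dvd_of_pow_eq_one hc
    rw [hord] at h1
    have := Nat.le_of_dvd (by omega) h1
    omega
  have hζ := chain_pos D hx hy (n-1) hstopfree
  have hstopn : (D.refl₁ x * D.refl₁ y)^((n-1)+1) = 1 := by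
    rw [show n - 1 + 1 = n by omega, ← hord]
    exact pow_orderOf_eq_one _
  have hrefl := (chain_stop_iff D hx hy (n-1)).2 hstopn
  have hcoords := chainV_coords D hx hy (n-1)
  rcases Nat.even_or_odd (n-1) with he | ho
  · left
    rw [if_pos he] at hrefl
    have hsmul := smul_of_refl_eq D hy.1.1 hζ.1 hrefl.symm
    have hμ : 0 < D.pair (chainV D (D.refl₁ x) (D.refl₁ y) x (n-1)) (D.phi y) :=
      pos_smul_pos_coeff D hy.1 hζ hsmul
    have h0 : (seqPQ (D.pair x (D.phi y)) (D.pair y (D.phi x)) (n-1)).1 • x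
        + ((seqPQ (D.pair x (D.phi y)) (D.pair y (D.phi x)) (n-1)).2
            - D.pair (chainV D (D.refl₁ x) (D.refl₁ y) x (n-1)) (D.phi y)) • y
        = 0 := by
      rw [sub_smul]
      linear_combination (norm := module) hcoords.symm.trans hsmul
    obtain ⟨h1, h2⟩ := indep D hx.1.1 hy.1.1 hxy _ _ h0
    exact ⟨h1, by linarith [sub_eq_zero.1 h2], he⟩
  · right
    have hne := Nat.not_even_iff_odd.2 ho
    rw [if_neg hne] at hrefl
    have hsmul := smul_of_refl_eq D hx.1.1 hζ.1 hrefl.symm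
    have hμ : 0 < D.pair (chainV D (D.refl₁ x) (D.refl₁ y) x (n-1)) (D.phi x) :=
      pos_smul_pos_coeff D hx.1 hζ hsmul
    have h0 : ((seqPQ (D.pair x (D.phi y)) (D.pair y (D.phi x)) (n-1)).1
            - D.pair (chainV D (D.refl₁ x) (D.refl₁ y) x (n-1)) (D.phi x)) • x
        + (seqPQ (D.pair x (D.phi y)) (D.pair y (D.phi x)) (n-1)).2 • y
        = 0 := by
      rw [sub_smul]
      linear_combination (norm := module) hcoords.symm.trans hsmul
    obtain ⟨h1, h2⟩ := indep D hx.1.1 hy.1.1 hxy _ _ h0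
    exact ⟨by linarith [sub_eq_zero.1 h1], h2, hne⟩

/-- The kill lemma: a small `c = ab < 1` together with stop-freeness in the
relevant range is contradictory. -/
theorem kill_theta (hx : x ∈ D.Delta₁ W') (hy : y ∈ D.Delta₁ W')
    (hxy : D.refl₁ x ≠ D.refl₁ y) (ha : D.pair x (D.phi y) < 0)
    {θ : ℝ} (hθ1 : 0 < θ) (hθ2 : θ < Real.pi/2)
    (hcos2 : Real.cos θ ^ 2 = D.pair x (D.phi y) * D.pair y (D.phi x))
    (hstopfree : ∀ j : ℕ, ((j:ℝ) + 1) < Real.pi/θ + 1 →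
      (D.refl₁ x * D.refl₁ y)^(j+1) ≠ 1) : False := by
  obtain ⟨k, hk1, hk2, hs1, hs2⟩ := exists_double_nonpos hθ1 hθ2
  obtain ⟨hp, hq⟩ := seqPQ_nonpos_of_sin ha hθ1 hθ2 hcos2 hs1 hs2
  have hζ := chain_pos D hx hy k (by
    intro j hj
    apply hstopfree j
    have : (j:ℝ) + 1 ≤ (k:ℝ) := by exact_mod_cast Nat.succ_le_of_lt hj
    linarith)
  exact kill_nonpos D hx.1 hy.1 hζ (chainV_coords D hx hy k) hp hq

end Endpoint

end CoxeterDatum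
theorem theta_exists {c : ℝ} (h0 : 0 < c) (h1 : c < 1) :
    ∃ θ : ℝ, 0 < θ ∧ θ < Real.pi/2 ∧ Real.cos θ ^ 2 = c := by
  have hsp : 0 < Real.sqrt c := Real.sqrt_pos.2 h0
  have hsl : Real.sqrt c < 1 := by
    rw [show (1:ℝ) = Real.sqrt 1 by simp]
    exact Real.sqrt_lt_sqrt h0.le h1
  refine ⟨Real.arccos (Real.sqrt c), Real.arccos_pos.2 hsl, ?_, ?_⟩
  · have h4 := Real.arcsin_pos.2 hsp
    rw [Real.arccos]
    linarith
  · rw [Real.cos_arccos (by linarith) (by linarith), Real.sq_sqrt h0.le]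

open CoxeterDatum in
theorem stmt19' {S V₁ V₂ W : Type*} [AddCommGroup V₁] [Module ℝ V₁]
    [AddCommGroup V₂] [Module ℝ V₂] [Group W]
    (D : CoxeterDatum S V₁ V₂ W)
    (W' : Subgroup W) (hW' : D.IsReflectionSubgroup W')
    (x y : V₁) (hx : x ∈ D.Delta₁ W') (hy : y ∈ D.Delta₁ W')
    (hxy : D.refl₁ x ≠ D.refl₁ y) :
    D.pair x (D.phi y) ≤ 0 ∧
    (∀ n : ℕ, 2 ≤ n → orderOf (D.refl₁ x * D.refl₁ y) = n →
      D.pair x (D.phi y) * D.pair y (D.phi x) = Real.cos (Real.pi / n) ^ 2) ∧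
    (¬ IsOfFinOrder (D.refl₁ x * D.refl₁ y) →
      1 ≤ D.pair x (D.phi y) * D.pair y (D.phi x)) := by
  have hxPhi : x ∈ D.Phi₁ := hx.1.1
  have hyPhi : y ∈ D.Phi₁ := hy.1.1
  have hswap : (D.refl₁ y * D.refl₁ x) * (D.refl₁ y * D.refl₁ x) = 1 →
      (D.refl₁ x * D.refl₁ y) * (D.refl₁ x * D.refl₁ y) = 1 := by
    intro h
    have h1 : (D.refl₁ x * D.refl₁ y) = (D.refl₁ y * D.refl₁ x)⁻¹ := by
      rw [mul_inv_rev, refl_inv D hxPhi, refl_inv D hyPhi]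
    rw [h1, ← mul_inv_rev, h, inv_one]
  refine ⟨a_nonpos D hx hy hxy, ?_, ?_⟩
  · -- Part (2)
    intro n hn2 hord
    rcases eq_or_lt_of_le hn2 with h2 | h3
    · -- n = 2
      have hsq : (D.refl₁ x * D.refl₁ y) * (D.refl₁ x * D.refl₁ y) = 1 := by
        have h := pow_orderOf_eq_one (D.refl₁ x * D.refl₁ y)
        rw [hord, ← h2, pow_two] at h
        exact h
      obtain ⟨e1, e2⟩ := ab_zero_of_sq D hxPhi hyPhi hxy hsq
      rw [e1, e2, ← h2]
      norm_num [Real.cos_pi_div_two]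
    · -- 3 ≤ n
      have hnz : D.pair x (D.phi y) ≠ 0 := by
        intro h0
        have hsq := sq_one_of_pair_zero D hxPhi hyPhi h0
        have hdvd : orderOf (D.refl₁ x * D.refl₁ y) ∣ 2 :=
          orderOf_dvd_of_pow_eq_one (by rw [pow_two]; exact hsq)
        rw [hord] at hdvd
        have := Nat.le_of_dvd (by norm_num) hdvd
        omega
      have hbz : D.pair y (D.phi x) ≠ 0 := by
        intro h0
        have hsq := hswap (sq_one_of_pair_zero D hyPhi hxPhi h0)
        have hdvd : orderOf (D.refl₁ x * D.refl₁ y) ∣ 2 :=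
          orderOf_dvd_of_pow_eq_one (by rw [pow_two]; exact hsq)
        rw [hord] at hdvd
        have := Nat.le_of_dvd (by norm_num) hdvd
        omega
      have ha : D.pair x (D.phi y) < 0 := lt_of_le_of_ne (a_nonpos D hx hy hxy) hnz
      have hb : D.pair y (D.phi x) < 0 := lt_of_le_of_ne (a_nonpos D hy hx hxy.symm) hbz
      have hcpos : 0 < D.pair x (D.phi y) * D.pair y (D.phi x) :=
        mul_pos_of_neg_of_neg ha hb
      have hclt1 : D.pair x (D.phi y) * D.pair y (D.phi x) < 1 := by
        by_contra hge
        push_neg at hge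
        obtain ⟨hp, hq⟩ := seqPQ_pos_of_one_le ha hb hge (n-1) (by omega)
        rcases endpoint_coords D hx hy hxy hn2 hord with ⟨h1, _, _⟩ | ⟨_, h1, _⟩
        · linarith
        · linarith
      obtain ⟨θ, hθpos, hθlt, hcos2⟩ := theta_exists hcpos hclt1
      have hπ := Real.pi_pos
      have hsθ : 0 < Real.sin θ :=
        Real.sin_pos_of_pos_of_lt_pi hθpos (by linarith)
      have hcθ : 0 < Real.cos θ :=
        Real.cos_pos_of_mem_Ioo ⟨by linarith, hθlt⟩
      obtain ⟨hp, hq⟩ := seqPQ_trig hθpos hθlt hcos2 (n-1)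
      have hidx : n - 1 + 1 = n := by omega
      have hsin0 : Real.sin ((n:ℝ) * θ) = 0 ∧ 0 < Real.sin (((n-1:ℕ):ℝ) * θ) := by
        rcases endpoint_coords D hx hy hxy hn2 hord with ⟨h1, hq2, hev⟩ | ⟨hp2, h1, hod⟩
        · rw [if_pos hev, hidx] at hp
          rw [if_pos hev] at hq
          constructor
          · rw [← hp, h1, zero_mul]
          · have hqpos : 0 < (-(D.pair x (D.phi y))) * Real.sin (((n-1:ℕ):ℝ) * θ) := by
              rw [← hq]
              exact mul_pos hq2 (mul_pos hsθ hcθ)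
            by_contra hns
            push_neg at hns
            nlinarith [mul_nonpos_of_nonneg_of_nonpos
              (by linarith : (0:ℝ) ≤ -(D.pair x (D.phi y))) hns]
        · rw [if_neg hod] at hp
          rw [if_neg hod, hidx] at hq
          constructor
          · have h5 : (-(D.pair x (D.phi y))) * Real.sin ((n:ℝ) * θ) = 0 := by
              rw [← hq, h1, zero_mul]
            rcases mul_eq_zero.1 h5 with h | h
            · linarith
            · exact h
          · rw [← hp]
            exact mul_pos hp2 hsθ
      obtain ⟨hsin0', hsin1'⟩ := hsin0
      obtain ⟨m, hm⟩ := Real.sin_eq_zero_iff.1 hsin0'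
      have hnRpos : (0:ℝ) < (n:ℝ) := by
        have : 0 < n := by omega
        exact_mod_cast this
      have hm0 : 0 < (m:ℝ) := by
        by_contra hc
        push_neg at hc
        nlinarith [hm, mul_pos hnRpos hθpos, mul_nonpos_of_nonpos_of_nonneg hc hπ.le]
      have hm0' : 0 < m := by exact_mod_cast hm0
      have hm2n : (m:ℝ) * 2 < (n:ℝ) := by
        by_contra hc
        push_neg at hc
        have h5 := mul_le_mul_of_nonneg_right hc hπ.le
        have h6 := mul_lt_mul_of_pos_left hθlt hnRpos
        nlinarith [hm]
      have hn1cast : ((n-1:ℕ):ℝ) = (n:ℝ) - 1 := by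
        rw [Nat.cast_sub (by omega)]
        norm_num
      have hn1θ : ((n-1:ℕ):ℝ) * θ = (m:ℝ) * Real.pi - θ := by
        rw [hn1cast, sub_mul, one_mul, ← hm]
      have hmodd : Odd m := by
        rcases Int.even_or_odd m with ⟨j, hj⟩ | h
        · exfalso
          have hc1 : Real.cos ((m:ℝ) * Real.pi) = 1 := by
            rw [hj]
            push_cast
            rw [show ((j:ℝ) + (j:ℝ)) * Real.pi = (j:ℝ) * (2 * Real.pi) by ring,
              Real.cos_int_mul_two_pi]
          have hs1 : Real.sin ((m:ℝ) * Real.pi) = 0 := Real.sin_int_mul_pi m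
          have h7 : Real.sin (((n-1:ℕ):ℝ) * θ) = -Real.sin θ := by
            rw [hn1θ, Real.sin_sub, hs1, hc1]
            ring
          rw [h7] at hsin1'
          linarith
        · exact h
      have hmeq : m = 1 := by
        by_contra hne
        have hm3 : 3 ≤ m := by
          obtain ⟨j, hj⟩ := hmodd
          omega
        apply kill_theta D hx hy hxy ha hθpos hθlt hcos2
        intro j hj hpow
        have hm3R : (3:ℝ) ≤ (m:ℝ) := by exact_mod_cast hm3
        have hπθ : Real.pi/θ = (n:ℝ)/(m:ℝ) := by
          have hθne : θ ≠ 0 := ne_of_gt hθpos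
          have hmne : (m:ℝ) ≠ 0 := by linarith
          field_simp
          linarith [hm]
        rw [hπθ] at hj
        have h8 : (n:ℝ)/(m:ℝ) ≤ (n:ℝ)/3 :=
          div_le_div_of_nonneg_left hnRpos.le (by norm_num) hm3R
        have h9 : (n:ℝ)/3 + 1 ≤ (n:ℝ) := by
          have h10 : (3:ℝ) ≤ (n:ℝ) := by
            have : 3 ≤ n := by omega
            exact_mod_cast this
          linarith
        have hjn : j + 1 < n := by
          have : ((j:ℝ)+1) < (n:ℝ) := by linarith
          exact_mod_cast this
        have hdvd := orderOf_dvd_of_pow_eq_one hpow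
        rw [hord] at hdvd
        have := Nat.le_of_dvd (by omega) hdvd
        omega
      have hθfinal : θ = Real.pi / (n:ℝ) := by
        rw [hmeq] at hm
        push_cast at hm
        rw [eq_div_iff (by linarith : (n:ℝ) ≠ 0)]
        linarith [hm]
      rw [← hcos2, hθfinal]
  · -- Part (3)
    intro hinf
    have hnz : D.pair x (D.phi y) ≠ 0 := fun h0 =>
      hinf (isOfFinOrder_iff_pow_eq_one.2 ⟨2, by norm_num,
        by rw [pow_two]; exact sq_one_of_pair_zero D hxPhi hyPhi h0⟩)
    have hbz : D.pair y (D.phi x) ≠ 0 := by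
      intro h0
      apply hinf
      refine isOfFinOrder_iff_pow_eq_one.2 ⟨2, by norm_num, ?_⟩
      rw [pow_two]
      exact hswap (sq_one_of_pair_zero D hyPhi hxPhi h0)
    have ha := lt_of_le_of_ne (a_nonpos D hx hy hxy) hnz
    have hb := lt_of_le_of_ne (a_nonpos D hy hx hxy.symm) hbz
    have hcpos := mul_pos_of_neg_of_neg ha hb
    by_contra hlt
    push_neg at hlt
    obtain ⟨θ, hθ1, hθ2, hcos2⟩ := theta_exists hcpos hlt
    exact kill_theta D hx hy hxy ha hθ1 hθ2 hcos2 (fun j _ hpow =>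
      hinf (isOfFinOrder_iff_pow_eq_one.2 ⟨j+1, by omega, hpow⟩))
/-- Let `W'` be a reflection subgroup of `W` and `x, y ∈ Δ₁(W')` with
`r_x ≠ r_y`, and let `n ∈ ℕ ∪ {∞}` be the order of `r_x r_y`.  Then
`⟨x, φ y⟩ ≤ 0`; moreover `⟨x, φ y⟩ ⟨y, φ x⟩ = cos²(π/n)` if `n ∈ ℕ`, `n ≥ 2`, and
`⟨x, φ y⟩ ⟨y, φ x⟩ ∈ [1, ∞)` if `n = ∞`. -/
theorem stmt19 {S V₁ V₂ W : Type*} [AddCommGroup V₁] [Module ℝ V₁]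
    [AddCommGroup V₂] [Module ℝ V₂] [Group W]
    (D : CoxeterDatum S V₁ V₂ W)
    (W' : Subgroup W) (hW' : D.IsReflectionSubgroup W')
    (x y : V₁) (hx : x ∈ D.Delta₁ W') (hy : y ∈ D.Delta₁ W')
    (hxy : D.refl₁ x ≠ D.refl₁ y) :
    D.pair x (D.phi y) ≤ 0 ∧
    (∀ n : ℕ, 2 ≤ n → orderOf (D.refl₁ x * D.refl₁ y) = n →
      D.pair x (D.phi y) * D.pair y (D.phi x) = Real.cos (Real.pi / n) ^ 2) ∧
    (¬ IsOfFinOrder (D.refl₁ x * D.refl₁ y) →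
      1 ≤ D.pair x (D.phi y) * D.pair y (D.phi x)) := by
  exact stmt19' D W' hW' x y hx hy hxy
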